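/- arXiv:0912.2151 — 2 statements merged into one kernel-verified Lean document; each statement's English description precedes it below -/
import Mathlib

section
/- Let Δ be a Gorenstein* simplicial complex on {1,...,m}, σ ∈ Δ a face of dimension d−1 with d ≥ 2, z a new variable, and M = Hom_{k[Δ][z]}((J_σ, z), k[Δ][z]). Then M is generated as a k[Δ][z]-module by the inclusion map i : (J_σ, z) → k[Δ][z] together with the unique homomorphism φ_σ satisfying φ_σ(z) = x_σ and φ_σ(u) = 0 for all u ∈ J_σ. -/
set_option synthInstance.maxHeartbeats 1000000
set_option maxHeartbeats 1000000

open MvPolynomial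
/-- An (abstract) simplicial complex on the vertex set `{1, …, m}` (modeled as `Fin m`):
a collection of finite subsets containing all singletons and closed under taking subsets. -/
def IsComplex {m : ℕ} (Δ : Set (Finset (Fin m))) : Prop :=
  (∀ i : Fin m, {i} ∈ Δ) ∧ ∀ ⦃s⦄, s ∈ Δ → ∀ ⦃t : Finset (Fin m)⦄, t ⊆ s → t ∈ Δ

/-- The square-free monomial with support `ρ`. -/
noncomputable def xmon (k : Type*) [Field k] {m : ℕ} (ρ : Finset (Fin m)) :
    MvPolynomial (Fin m) k := ∏ i ∈ ρ, X i

/-- The Stanley–Reisner ideal of `Δ`: generated by the square-free monomials of non-faces. -/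
noncomputable def srIdeal (k : Type*) [Field k] {m : ℕ} (Δ : Set (Finset (Fin m))) :
    Ideal (MvPolynomial (Fin m) k) :=
  Ideal.span ((fun ρ => xmon k ρ) '' {ρ : Finset (Fin m) | ρ ∉ Δ})

/-- The Stanley–Reisner ring `k[Δ]`. -/
abbrev SR (k : Type*) [Field k] {m : ℕ} (Δ : Set (Finset (Fin m))) :=
  MvPolynomial (Fin m) k ⧸ srIdeal k Δ

/-- The class of the monomial `x_σ` in `k[Δ]`. -/
noncomputable def xcls (k : Type*) [Field k] {m : ℕ} (Δ : Set (Finset (Fin m)))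
    (σ : Finset (Fin m)) : SR k Δ :=
  Ideal.Quotient.mk (srIdeal k Δ) (xmon k σ)

/-- `J_σ = (0 : x_σ)`, the annihilator of `x_σ` in `k[Δ]`. -/
noncomputable def Jσ (k : Type*) [Field k] {m : ℕ} (Δ : Set (Finset (Fin m)))
    (σ : Finset (Fin m)) : Ideal (SR k Δ) :=
  (⊥ : Ideal (SR k Δ)).colon (Ideal.span {xcls k Δ σ})

/-- Facets: faces maximal under inclusion. -/
def IsFacet {m : ℕ} (Δ : Set (Finset (Fin m))) (τ : Finset (Fin m)) : Prop :=
  τ ∈ Δ ∧ ∀ ρ ∈ Δ, τ ⊆ ρ → τ = ρ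

/-- A complex is pure if all facets have the same cardinality. -/
def IsPure {m : ℕ} (Δ : Set (Finset (Fin m))) : Prop :=
  ∀ τ ρ, IsFacet Δ τ → IsFacet Δ ρ → τ.card = ρ.card

/-- The link of a face `σ`. -/
def link {m : ℕ} (Δ : Set (Finset (Fin m))) (σ : Finset (Fin m)) :
    Set (Finset (Fin m)) :=
  {τ | Disjoint τ σ ∧ τ ∪ σ ∈ Δ}

/-- One more than the dimension of `Δ`: the largest cardinality of a face. -/
noncomputable def topCard {m : ℕ} (Δ : Set (Finset (Fin m))) : ℕ :=
  sSup ((fun σ : Finset (Fin m) => σ.card) '' Δ)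

/-- The space of simplicial `c`-chains (indexed by cardinality `c`; the empty set is
the unique "(-1)-dimensional" chain generator, giving *reduced* chains). -/
abbrev SChain (k : Type*) [Field k] (m c : ℕ) : Type _ :=
  {σ : Finset (Fin m) // σ.card = c} →₀ k

/-- The simplicial boundary map on chains of cardinality `c`. -/
noncomputable def sBdry (k : Type*) [Field k] (m c : ℕ) :
    SChain k m c →ₗ[k] SChain k m (c - 1) :=
  Finsupp.lsum k fun σ => LinearMap.toSpanSingleton k _
    (∑ j ∈ σ.1.attach, ((-1 : k) ^ ((σ.1.filter (fun a => a < j.1)).card)) •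
      Finsupp.single ⟨σ.1.erase j.1, by rw [Finset.card_erase_of_mem j.2, σ.2]⟩ 1)

/-- Chains supported on faces of `Δ`. -/
noncomputable def faceSpan (k : Type*) [Field k] {m : ℕ} (Δ : Set (Finset (Fin m)))
    (c : ℕ) : Submodule k (SChain k m c) :=
  Submodule.span k
    {x | ∃ σ : {σ : Finset (Fin m) // σ.card = c}, σ.1 ∈ Δ ∧ x = Finsupp.single σ 1}

/-- Reduced simplicial homology of `Δ` (with coefficients in `k`) in chain-cardinality `c`,
i.e. `H̃_{c-1}(Δ; k)`. -/
noncomputable abbrev sCycles (k : Type*) [Field k] {m : ℕ} (Δ : Set (Finset (Fin m)))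
    (c : ℕ) : Submodule k (SChain k m c) :=
  LinearMap.ker (sBdry k m c) ⊓ faceSpan k Δ c

noncomputable def redHomology (k : Type*) [Field k] {m : ℕ} (Δ : Set (Finset (Fin m)))
    (c : ℕ) : Type _ :=
  letI : HasQuotient (sCycles k Δ c) (Submodule k (sCycles k Δ c)) := Submodule.hasQuotient (R := k) (M := sCycles k Δ c)
  (sCycles k Δ c) ⧸
    (Submodule.comap (sCycles k Δ c).subtype
      (Submodule.map (sBdry k m (c + 1)) (faceSpan k Δ (c + 1))))

noncomputable instance (k : Type*) [Field k] {m : ℕ} (Δ : Set (Finset (Fin m))) (c : ℕ) :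
    AddCommGroup (redHomology k Δ c) := by unfold redHomology; infer_instance

noncomputable instance (k : Type*) [Field k] {m : ℕ} (Δ : Set (Finset (Fin m))) (c : ℕ) :
    Module k (redHomology k Δ c) := by unfold redHomology; infer_instance

/-- `Δ` is Gorenstein* over `k`: for every face `σ` the link of `σ` has the reduced homology
of a sphere of dimension `dim lk(σ)`.  (Chain-cardinality `c` corresponds to dimension
`c - 1`, and `topCard` is `dim + 1`.) -/
def IsGorensteinStar (k : Type*) [Field k] {m : ℕ} (Δ : Set (Finset (Fin m))) : Prop :=
  ∀ σ ∈ Δ, ∀ c : ℕ,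
    Module.rank k (redHomology k (link Δ σ) c) =
      if c = topCard (link Δ σ) then 1 else 0


/-- The ideal `(J_σ, z)` of `k[Δ][z]`. -/
noncomputable def JzIdeal (k : Type*) [Field k] {m : ℕ} (Δ : Set (Finset (Fin m)))
    (σ : Finset (Fin m)) : Ideal (Polynomial (SR k Δ)) :=
  Ideal.span (Polynomial.C '' (Jσ k Δ σ : Set (SR k Δ)) ∪ {Polynomial.X})

lemma X_mem_JzIdeal (k : Type*) [Field k] {m : ℕ} (Δ : Set (Finset (Fin m)))
    (σ : Finset (Fin m)) : (Polynomial.X : Polynomial (SR k Δ)) ∈ JzIdeal k Δ σ :=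
  Ideal.subset_span (Or.inr rfl)

lemma C_mem_JzIdeal (k : Type*) [Field k] {m : ℕ} (Δ : Set (Finset (Fin m)))
    (σ : Finset (Fin m)) (u : SR k Δ) (hu : u ∈ Jσ k Δ σ) :
    (Polynomial.C u : Polynomial (SR k Δ)) ∈ JzIdeal k Δ σ :=
  Ideal.subset_span (Or.inl ⟨u, hu, rfl⟩)

/-! ### Auxiliary development -/

section AuxComb

variable {k : Type*} [Field k] {m : ℕ} {Δ : Set (Finset (Fin m))}

/-- The exponent vector which is `1` exactly on `ρ`. -/
noncomputable def indF (ρ : Finset (Fin m)) : Fin m →₀ ℕ := ∑ i ∈ ρ, Finsupp.single i 1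

lemma indF_apply (ρ : Finset (Fin m)) (i : Fin m) : indF ρ i = if i ∈ ρ then 1 else 0 := by
  classical
  rw [indF, Finsupp.finset_sum_apply]
  simp [Finsupp.single_apply]

lemma indF_support (ρ : Finset (Fin m)) : (indF ρ).support = ρ := by
  ext i
  rw [Finsupp.mem_support_iff, indF_apply]
  by_cases h : i ∈ ρ <;> simp [h]

lemma xmon_eq (ρ : Finset (Fin m)) :
    xmon k ρ = MvPolynomial.monomial (indF ρ) (1 : k) := by
  rw [MvPolynomial.monomial_eq, map_one, one_mul, Finsupp.prod, indF_support, xmon]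
  refine Finset.prod_congr rfl fun i hi => ?_
  rw [indF_apply, if_pos hi, pow_one]

lemma sub_indF_add (b : Fin m →₀ ℕ) (s : Finset (Fin m)) (hs : s ⊆ b.support) :
    (b - indF s) + indF s = b := by
  ext i
  simp only [Finsupp.add_apply, Finsupp.tsub_apply, indF_apply]
  by_cases h : i ∈ s
  · rw [if_pos h]
    have : b i ≠ 0 := Finsupp.mem_support_iff.mp (hs h)
    omega
  · rw [if_neg h]; omega

lemma support_add_union (b c : Fin m →₀ ℕ) : (b + c).support = b.support ∪ c.support := by
  ext i
  simp only [Finsupp.mem_support_iff, Finset.mem_union, Finsupp.add_apply]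
  omega

lemma monomial_mem_srIdeal (b : Fin m →₀ ℕ) (hb : b.support ∉ Δ) (c : k) :
    MvPolynomial.monomial b c ∈ srIdeal k Δ := by
  have h1 : (MvPolynomial.monomial b c : MvPolynomial (Fin m) k)
      = MvPolynomial.monomial (b - indF b.support) c * xmon k b.support := by
    rw [xmon_eq, MvPolynomial.monomial_mul, mul_one, sub_indF_add b _ subset_rfl]
  rw [h1]
  exact Ideal.mul_mem_left _ _ (Ideal.subset_span ⟨b.support, hb, rfl⟩)

/-- The ideal of polynomials all of whose monomials have non-face support. -/
noncomputable def goodIdeal (k : Type*) [Field k] {m : ℕ} (Δ : Set (Finset (Fin m)))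
    (hΔ : IsComplex Δ) : Ideal (MvPolynomial (Fin m) k) where
  carrier := {F | ∀ b : Fin m →₀ ℕ, b.support ∈ Δ → MvPolynomial.coeff b F = 0}
  add_mem' := by
    intro a b ha hb c hc
    rw [MvPolynomial.coeff_add, ha c hc, hb c hc, add_zero]
  zero_mem' := by intro b hb; simp
  smul_mem' := by
    classical
    intro r F hF b hb
    rw [smul_eq_mul, MvPolynomial.coeff_mul]
    apply Finset.sum_eq_zero
    rintro ⟨u, v⟩ huv
    have hsum : u + v = b := Finset.HasAntidiagonal.mem_antidiagonal.mp huv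
    have hsub : v.support ⊆ b.support := by
      intro i hi
      rw [Finsupp.mem_support_iff] at hi ⊢
      have h1 : u i + v i = b i := by rw [← hsum]; rfl
      omega
    rw [hF v (hΔ.2 hb hsub), mul_zero]

lemma coeff_eq_zero_of_mem_srIdeal (hΔ : IsComplex Δ) {F : MvPolynomial (Fin m) k}
    (hF : F ∈ srIdeal k Δ) {b : Fin m →₀ ℕ} (hb : b.support ∈ Δ) :
    MvPolynomial.coeff b F = 0 := by
  classical
  have hle : srIdeal k Δ ≤ goodIdeal k Δ hΔ := by
    rw [srIdeal, Ideal.span_le]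
    rintro _ ⟨ρ, hρ, rfl⟩ b hb
    show MvPolynomial.coeff b (xmon k ρ) = 0
    rw [xmon_eq, MvPolynomial.coeff_monomial]
    split
    · next h =>
      have : ρ ∈ Δ := by rwa [← h, indF_support] at hb
      exact absurd this hρ
    · rfl
  exact hle hF b hb

lemma Jσ_mul_xcls {σ : Finset (Fin m)} {u : SR k Δ} (hu : u ∈ Jσ k Δ σ) :
    u * xcls k Δ σ = 0 := by
  have := Ideal.mem_colon_span_singleton.mp hu
  rwa [Ideal.mem_bot] at this

lemma monomial_mem_Jσ {σ : Finset (Fin m)} {b : Fin m →₀ ℕ}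
    (hb : b.support ∪ σ ∉ Δ) :
    Ideal.Quotient.mk (srIdeal k Δ) (MvPolynomial.monomial b 1) ∈ Jσ k Δ σ := by
  rw [Jσ, Ideal.mem_colon_span_singleton, Ideal.mem_bot, xcls, ← map_mul, xmon_eq,
    MvPolynomial.monomial_mul, mul_one, Ideal.Quotient.eq_zero_iff_mem]
  apply monomial_mem_srIdeal
  rwa [support_add_union, indF_support]

lemma cycles_triv {k : Type*} [Field k] {m : ℕ} {L : Set (Finset (Fin m))} {v : Fin m}
    {c : ℕ} (hv : ∀ τ : Finset (Fin m), τ ∈ L → τ.card = c → v ∈ τ)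
    {z : SChain k m c} (hz : z ∈ sCycles k L c) : z = 0 := by
  classical
  obtain ⟨hker, hface⟩ := Submodule.mem_inf.mp hz
  have hsupp : ∀ τ ∈ z.support, τ.1 ∈ L := by
    have hle : faceSpan k L c ≤
        Finsupp.supported k k {τ : {σ : Finset (Fin m) // σ.card = c} | τ.1 ∈ L} := by
      rw [faceSpan]
      apply Submodule.span_le.mpr
      rintro x ⟨τ, hτ, rfl⟩
      rw [SetLike.mem_coe, Finsupp.mem_supported]
      intro a ha
      have h1 := Finsupp.support_single_subset ha
      rw [Finset.mem_singleton] at h1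
      subst h1; exact hτ
    intro τ hτ
    exact (Finsupp.mem_supported k z).mp (hle hface) hτ
  ext τ
  rw [Finsupp.coe_zero, Pi.zero_apply]
  by_contra hne
  have hτs : τ ∈ z.support := Finsupp.mem_support_iff.mpr hne
  have hvτ : v ∈ τ.1 := hv τ.1 (hsupp τ hτs) τ.2
  have hbz : sBdry k m c z = 0 := LinearMap.mem_ker.mp hker
  set e : {σ : Finset (Fin m) // σ.card = c - 1} :=
    ⟨τ.1.erase v, by rw [Finset.card_erase_of_mem hvτ, τ.2]⟩ with he
  have hinner : ∀ σ : {s : Finset (Fin m) // s.card = c}, σ ∈ z.support →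
      ((∑ j ∈ σ.1.attach, ((-1 : k) ^ ((σ.1.filter (fun a => a < j.1)).card)) •
        Finsupp.single (⟨σ.1.erase j.1, by rw [Finset.card_erase_of_mem j.2, σ.2]⟩ :
          {s : Finset (Fin m) // s.card = c - 1}) (1 : k)) e)
      = if σ = τ then (-1 : k) ^ ((τ.1.filter (fun a => a < v)).card) else 0 := by
    intro σ hσ
    have hvσ : v ∈ σ.1 := hv σ.1 (hsupp σ hσ) σ.2
    rw [Finsupp.finset_sum_apply]
    by_cases hστ : σ = τ
    · subst hστ
      rw [if_pos rfl]
      rw [Finset.sum_eq_single_of_mem (⟨v, hvσ⟩ : {x // x ∈ σ.1}) (Finset.mem_attach _ _)]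
      · rw [Finsupp.smul_apply, Finsupp.single_apply, if_pos (Subtype.ext rfl),
          smul_eq_mul, mul_one]
      · rintro ⟨j, hj⟩ - hjv
        have hjv' : j ≠ v := fun h => hjv (by simpa using h)
        rw [Finsupp.smul_apply, Finsupp.single_apply, if_neg, smul_zero]
        intro hcon
        have hcon' : σ.1.erase j = σ.1.erase v := congrArg Subtype.val hcon
        have : v ∈ σ.1.erase j := Finset.mem_erase.mpr ⟨(Ne.symm hjv'), hvσ⟩
        rw [hcon'] at this
        exact (Finset.notMem_erase v σ.1) this
    · rw [if_neg hστ]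
      apply Finset.sum_eq_zero
      rintro ⟨j, hj⟩ -
      rw [Finsupp.smul_apply, Finsupp.single_apply, if_neg, smul_zero]
      intro hcon
      have hcon' : σ.1.erase j = τ.1.erase v := congrArg Subtype.val hcon
      by_cases hjv : j = v
      · subst hjv
        have : σ.1 = τ.1 := by
          rw [← Finset.insert_erase hvσ, ← Finset.insert_erase hvτ]
          rw [show σ.1.erase j = σ.1.erase j from rfl] at hcon'
          rw [hcon']
        exact hστ (Subtype.ext this)
      · have : v ∈ σ.1.erase j := Finset.mem_erase.mpr ⟨Ne.symm hjv, hvσ⟩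
        rw [hcon'] at this
        exact (Finset.notMem_erase v τ.1) this
  have heval : (sBdry k m c z) e = z τ * (-1 : k) ^ ((τ.1.filter (fun a => a < v)).card) := by
    rw [sBdry, Finsupp.lsum_apply, Finsupp.sum_apply, Finsupp.sum]
    simp only [LinearMap.toSpanSingleton_apply, Finsupp.smul_apply, smul_eq_mul]
    rw [Finset.sum_eq_single_of_mem τ hτs]
    · rw [hinner τ hτs, if_pos rfl]
    · intro σ hσ hne'
      rw [hinner σ hσ, if_neg hne', mul_zero]
  rw [hbz] at heval
  have h0 : (0 : k) = z τ * (-1 : k) ^ ((τ.1.filter (fun a => a < v)).card) := heval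
  have hpow : ((-1 : k) ^ ((τ.1.filter (fun a => a < v)).card)) ≠ 0 :=
    pow_ne_zero _ (neg_ne_zero.mpr one_ne_zero)
  rcases mul_eq_zero.mp h0.symm with h | h
  · exact hne h
  · exact hpow h

lemma face_subset_of_star {k : Type*} [Field k] {m : ℕ} {Δ : Set (Finset (Fin m))}
    (hΔ : IsComplex Δ) (hG : IsGorensteinStar k Δ)
    {σ τ : Finset (Fin m)} (hσ : σ ∈ Δ) (hτ : τ ∈ Δ)
    (H : ∀ ρ : Finset (Fin m), ρ ∪ τ ∈ Δ → ρ ∪ σ ∈ Δ) : σ ⊆ τ := by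
  classical
  by_contra hns
  obtain ⟨v, hvσ, hvτ⟩ := Finset.not_subset.mp hns
  set L := link Δ τ with hL
  have hcone : ∀ α ∈ L, insert v α ∈ L := by
    rintro α ⟨hd, hα⟩
    constructor
    · rw [Finset.disjoint_left]
      intro x hx
      rcases Finset.mem_insert.mp hx with rfl | hx'
      · exact hvτ
      · exact (Finset.disjoint_left.mp hd) hx'
    · have h1 : (α ∪ τ) ∪ σ ∈ Δ := H _ (by rwa [Finset.union_assoc, Finset.union_self])
      refine hΔ.2 h1 ?_
      intro x hx
      simp only [Finset.mem_union, Finset.mem_insert] at hx ⊢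
      rcases hx with (rfl | hx') | hx''
      · exact Or.inr hvσ
      · exact Or.inl (Or.inl hx')
      · exact Or.inl (Or.inr hx'')
  have hvL : {v} ∈ L := by
    constructor
    · rw [Finset.disjoint_left]
      intro x hx
      rw [Finset.mem_singleton] at hx
      subst hx; exact hvτ
    · have h1 : τ ∪ σ ∈ Δ := H τ (by rwa [Finset.union_self])
      refine hΔ.2 h1 ?_
      intro x hx
      simp only [Finset.mem_union, Finset.mem_singleton] at hx ⊢
      rcases hx with rfl | hx'
      · exact Or.inr hvσ
      · exact Or.inl hx'
  have hbdd : BddAbove ((fun σ : Finset (Fin m) => σ.card) '' L) := by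
    refine ⟨m, ?_⟩
    rintro _ ⟨ρ, -, rfl⟩
    simpa using Finset.card_le_univ ρ
  set c := topCard L with hc
  have hcard_le : ∀ α ∈ L, α.card ≤ c := fun α hα => le_csSup hbdd ⟨α, hα, rfl⟩
  have hv : ∀ α : Finset (Fin m), α ∈ L → α.card = c → v ∈ α := by
    intro α hα hcard
    by_contra hvα
    have h2 := hcard_le _ (hcone α hα)
    rw [Finset.card_insert_of_notMem hvα, hcard] at h2
    omega
  have hss : Subsingleton (redHomology k L c) := by
    have h1 : Subsingleton (sCycles k L c) :=
      ⟨fun a b => Subtype.ext (by rw [cycles_triv hv a.2, cycles_triv hv b.2])⟩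
    unfold redHomology
    exact ⟨fun a b => by
      obtain ⟨x, rfl⟩ := Submodule.Quotient.mk_surjective _ a
      obtain ⟨y, rfl⟩ := Submodule.Quotient.mk_surjective _ b
      rw [Subsingleton.elim x y]⟩
  have hGc := hG τ hτ c
  rw [← hL, ← hc, if_pos rfl, rank_subsingleton'] at hGc
  exact zero_ne_one hGc

lemma mem_span_xcls {k : Type*} [Field k] {m : ℕ} {Δ : Set (Finset (Fin m))}
    (hΔ : IsComplex Δ) (hG : IsGorensteinStar k Δ) {σ : Finset (Fin m)} (hσ : σ ∈ Δ)
    (y : SR k Δ) (hy : ∀ u ∈ Jσ k Δ σ, u * y = 0) :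
    y ∈ Ideal.span {xcls k Δ σ} := by
  classical
  obtain ⟨Y, rfl⟩ := Ideal.Quotient.mk_surjective y
  have hkey : ∀ b ∈ Y.support, b.support ∉ Δ ∨ σ ⊆ b.support := by
    intro b hb
    by_contra hcon
    push_neg at hcon
    obtain ⟨hb1, hb2⟩ := hcon
    have hex : ∃ ρ, ρ ∪ b.support ∈ Δ ∧ ρ ∪ σ ∉ Δ := by
      by_contra h
      push_neg at h
      exact hb2 (face_subset_of_star hΔ hG hσ hb1 h)
    obtain ⟨ρ, hρ1, hρ2⟩ := hex
    have hu : Ideal.Quotient.mk (srIdeal k Δ) (MvPolynomial.monomial (indF ρ) 1) ∈ Jσ k Δ σ :=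
      monomial_mem_Jσ (by rwa [indF_support])
    have h0 := hy _ hu
    rw [← map_mul, Ideal.Quotient.eq_zero_iff_mem] at h0
    have h1 := coeff_eq_zero_of_mem_srIdeal hΔ h0 (b := indF ρ + b)
      (by rw [support_add_union, indF_support]; exact hρ1)
    rw [MvPolynomial.coeff_monomial_mul, one_mul] at h1
    exact MvPolynomial.mem_support_iff.mp hb h1
  rw [← MvPolynomial.support_sum_monomial_coeff Y, map_sum]
  apply Submodule.sum_mem
  intro b hb
  rcases hkey b hb with h | h
  · rw [Ideal.Quotient.eq_zero_iff_mem.mpr (monomial_mem_srIdeal b h _)]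
    exact Submodule.zero_mem _
  · apply Ideal.mem_span_singleton'.mpr
    refine ⟨Ideal.Quotient.mk _ (MvPolynomial.monomial (b - indF σ) (MvPolynomial.coeff b Y)), ?_⟩
    rw [xcls, ← map_mul, xmon_eq, MvPolynomial.monomial_mul, mul_one, sub_indF_add b σ h]

end AuxComb

section AuxPoly

variable {k : Type*} [Field k] {m : ℕ} {Δ : Set (Finset (Fin m))} {σ : Finset (Fin m)}

lemma X_mul_inj {A : Type*} [Semiring A] {a b : Polynomial A}
    (h : Polynomial.X * a = Polynomial.X * b) : a = b := by
  ext n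
  have h1 := congrArg (fun q => Polynomial.coeff q (n + 1)) h
  simpa [Polynomial.coeff_X_mul] using h1

lemma divX_X' {A : Type*} [Semiring A] : (Polynomial.X : Polynomial A).divX = 1 := by
  apply X_mul_inj (A := A)
  have h1 := Polynomial.X_mul_divX_add (Polynomial.X : Polynomial A)
  rw [Polynomial.coeff_X_zero, map_zero, add_zero] at h1
  rw [h1, mul_one]

lemma coeff_zero_mem_Jσ {p : Polynomial (SR k Δ)} (hp : p ∈ JzIdeal k Δ σ) :
    p.coeff 0 ∈ Jσ k Δ σ := by
  have hle : JzIdeal k Δ σ ≤ (Jσ k Δ σ).comap (Polynomial.evalRingHom (0 : SR k Δ)) := by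
    rw [JzIdeal, Ideal.span_le]
    rintro q (⟨u, hu, rfl⟩ | rfl)
    · simpa [Ideal.mem_comap] using hu
    · simp [Ideal.mem_comap]
  have h1 := hle hp
  rwa [Ideal.mem_comap, Polynomial.coe_evalRingHom, ← Polynomial.coeff_zero_eq_eval_zero]
    at h1

/-- The homomorphism `φ_σ : (J_σ, z) → k[Δ][z]` with `φ_σ(z) = x_σ`, `φ_σ(J_σ) = 0`. -/
noncomputable def phi0 (k : Type*) [Field k] {m : ℕ} (Δ : Set (Finset (Fin m)))
    (σ : Finset (Fin m)) :
    (JzIdeal k Δ σ) →ₗ[Polynomial (SR k Δ)] Polynomial (SR k Δ) where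
  toFun p := Polynomial.C (xcls k Δ σ) * (p : Polynomial (SR k Δ)).divX
  map_add' p q := by
    simp only [Submodule.coe_add, Polynomial.divX_add, mul_add]
  map_smul' r p := by
    simp only [RingHom.id_apply, SetLike.val_smul, smul_eq_mul]
    apply X_mul_inj (A := SR k Δ)
    have h1 : Polynomial.X * (r * (p : Polynomial (SR k Δ))).divX
        = r * (p : Polynomial (SR k Δ))
          - Polynomial.C ((r * (p : Polynomial (SR k Δ))).coeff 0) :=
      eq_sub_of_add_eq (Polynomial.X_mul_divX_add _)
    have h2 : Polynomial.X * (p : Polynomial (SR k Δ)).divX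
        = (p : Polynomial (SR k Δ)) - Polynomial.C ((p : Polynomial (SR k Δ)).coeff 0) :=
      eq_sub_of_add_eq (Polynomial.X_mul_divX_add _)
    have hann : (p : Polynomial (SR k Δ)).coeff 0 * xcls k Δ σ = 0 :=
      Jσ_mul_xcls (coeff_zero_mem_Jσ p.2)
    have e1 : Polynomial.C (xcls k Δ σ)
        * Polynomial.C ((p : Polynomial (SR k Δ)).coeff 0) = 0 := by
      rw [← Polynomial.C_mul, mul_comm, hann, Polynomial.C_0]
    calc Polynomial.X * (Polynomial.C (xcls k Δ σ)
            * (r * (p : Polynomial (SR k Δ))).divX)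
        = Polynomial.C (xcls k Δ σ)
            * (Polynomial.X * (r * (p : Polynomial (SR k Δ))).divX) := by ring
      _ = Polynomial.C (xcls k Δ σ) * (r * (p : Polynomial (SR k Δ)))
            - Polynomial.C (r.coeff 0)
              * (Polynomial.C (xcls k Δ σ)
                * Polynomial.C ((p : Polynomial (SR k Δ)).coeff 0)) := by
          rw [h1, Polynomial.mul_coeff_zero, Polynomial.C_mul]; ring
      _ = Polynomial.C (xcls k Δ σ) * (r * (p : Polynomial (SR k Δ))) := by
          rw [e1, mul_zero, sub_zero]
      _ = Polynomial.X * (r * (Polynomial.C (xcls k Δ σ)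
            * (p : Polynomial (SR k Δ)).divX)) := by
          rw [show Polynomial.X * (r * (Polynomial.C (xcls k Δ σ)
              * (p : Polynomial (SR k Δ)).divX))
            = r * Polynomial.C (xcls k Δ σ)
              * (Polynomial.X * (p : Polynomial (SR k Δ)).divX) by ring, h2]
          rw [mul_sub]
          rw [show r * Polynomial.C (xcls k Δ σ)
              * Polynomial.C ((p : Polynomial (SR k Δ)).coeff 0)
            = r * (Polynomial.C (xcls k Δ σ)
              * Polynomial.C ((p : Polynomial (SR k Δ)).coeff 0)) by ring, e1]
          ring

lemma phi0_X : phi0 k Δ σ ⟨Polynomial.X, X_mem_JzIdeal k Δ σ⟩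
    = Polynomial.C (xcls k Δ σ) := by
  show Polynomial.C (xcls k Δ σ) * (Polynomial.X : Polynomial (SR k Δ)).divX = _
  rw [divX_X', mul_one]

lemma phi0_C (u : SR k Δ) (hu : u ∈ Jσ k Δ σ) :
    phi0 k Δ σ ⟨Polynomial.C u, C_mem_JzIdeal k Δ σ u hu⟩ = 0 := by
  show Polynomial.C (xcls k Δ σ) * (Polynomial.C u : Polynomial (SR k Δ)).divX = _
  rw [Polynomial.divX_C, mul_zero]

lemma hom_ext_on_gens
    (ψ₁ ψ₂ : (JzIdeal k Δ σ) →ₗ[Polynomial (SR k Δ)] Polynomial (SR k Δ))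
    (hX : ψ₁ ⟨Polynomial.X, X_mem_JzIdeal k Δ σ⟩ = ψ₂ ⟨Polynomial.X, X_mem_JzIdeal k Δ σ⟩)
    (hC : ∀ u (hu : u ∈ Jσ k Δ σ),
      ψ₁ ⟨Polynomial.C u, C_mem_JzIdeal k Δ σ u hu⟩
        = ψ₂ ⟨Polynomial.C u, C_mem_JzIdeal k Δ σ u hu⟩) :
    ψ₁ = ψ₂ := by
  have key : ∀ q (hq : q ∈ Ideal.span
      (Polynomial.C '' (Jσ k Δ σ : Set (SR k Δ)) ∪ {Polynomial.X})),
      ψ₁ ⟨q, hq⟩ = ψ₂ ⟨q, hq⟩ := by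
    intro q hq
    induction hq using Submodule.span_induction with
    | mem x h =>
      rcases h with ⟨u, hu, rfl⟩ | rfl
      · exact hC u hu
      · exact hX
    | zero =>
      have h0 : (⟨0, Submodule.zero_mem _⟩ : JzIdeal k Δ σ) = 0 := rfl
      rw [h0, map_zero, map_zero]
    | add x y hx hy ihx ihy =>
      have h0 : (⟨x + y, Submodule.add_mem _ hx hy⟩ : JzIdeal k Δ σ)
          = ⟨x, hx⟩ + ⟨y, hy⟩ := rfl
      rw [h0, map_add, map_add, ihx, ihy]
    | smul a x hx ih =>
      have h0 : (⟨a • x, Submodule.smul_mem _ a hx⟩ : JzIdeal k Δ σ)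
          = a • (⟨x, hx⟩ : JzIdeal k Δ σ) := rfl
      rw [h0, map_smul, map_smul, ih]
  apply LinearMap.ext
  intro p
  exact key p.1 p.2

end AuxPoly

/-- `M = Hom_{k[Δ][z]}((J_σ, z), k[Δ][z])` is generated as a `k[Δ][z]`-module
by the inclusion `i` and the (unique) homomorphism `φ_σ` with `φ_σ(z) = x_σ` and
`φ_σ(u) = 0` for `u ∈ J_σ`. -/
theorem hom_module_generated_by_inclusion_and_phi (k : Type*) [Field k] {m : ℕ}
    (Δ : Set (Finset (Fin m))) (hΔ : IsComplex Δ) (hG : IsGorensteinStar k Δ)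
    (σ : Finset (Fin m)) (hσ : σ ∈ Δ) (hcard : 2 ≤ σ.card) :
    (∃! φ : (JzIdeal k Δ σ) →ₗ[Polynomial (SR k Δ)] Polynomial (SR k Δ),
        φ ⟨Polynomial.X, X_mem_JzIdeal k Δ σ⟩ = Polynomial.C (xcls k Δ σ) ∧
        ∀ u : SR k Δ, ∀ hu : u ∈ Jσ k Δ σ,
          φ ⟨Polynomial.C u, C_mem_JzIdeal k Δ σ u hu⟩ = 0) ∧
    ∀ φ : (JzIdeal k Δ σ) →ₗ[Polynomial (SR k Δ)] Polynomial (SR k Δ),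
      (φ ⟨Polynomial.X, X_mem_JzIdeal k Δ σ⟩ = Polynomial.C (xcls k Δ σ) ∧
        ∀ u : SR k Δ, ∀ hu : u ∈ Jσ k Δ σ,
          φ ⟨Polynomial.C u, C_mem_JzIdeal k Δ σ u hu⟩ = 0) →
      ∀ f : (JzIdeal k Δ σ) →ₗ[Polynomial (SR k Δ)] Polynomial (SR k Δ),
        letI : SMulCommClass (Polynomial (SR k Δ)) (Polynomial (SR k Δ)) (Polynomial (SR k Δ)) :=
          @Algebra.to_smulCommClass (Polynomial (SR k Δ)) (Polynomial (SR k Δ)) _ _ _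
        f ∈ Submodule.span (Polynomial (SR k Δ)) {(JzIdeal k Δ σ).subtype, φ} := by
  classical
  letI : SMulCommClass (Polynomial (SR k Δ)) (Polynomial (SR k Δ)) (Polynomial (SR k Δ)) :=
    @Algebra.to_smulCommClass (Polynomial (SR k Δ)) (Polynomial (SR k Δ)) _ _ _
  have huniq : ∀ ψ : (JzIdeal k Δ σ) →ₗ[Polynomial (SR k Δ)] Polynomial (SR k Δ),
      (ψ ⟨Polynomial.X, X_mem_JzIdeal k Δ σ⟩ = Polynomial.C (xcls k Δ σ) ∧
        ∀ u : SR k Δ, ∀ hu : u ∈ Jσ k Δ σ,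
          ψ ⟨Polynomial.C u, C_mem_JzIdeal k Δ σ u hu⟩ = 0) → ψ = phi0 k Δ σ := by
    rintro ψ ⟨hX', hC'⟩
    exact hom_ext_on_gens ψ (phi0 k Δ σ) (by rw [hX', phi0_X])
      (fun u hu => by rw [hC' u hu, phi0_C u hu])
  constructor
  · exact ⟨phi0 k Δ σ, ⟨phi0_X, fun u hu => phi0_C u hu⟩, fun ψ h => huniq ψ h⟩
  · intro φ hφ f
    have hφ0 := huniq φ hφ
    subst hφ0
    set a := f ⟨Polynomial.X, X_mem_JzIdeal k Δ σ⟩ with ha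
    have hcomm : ∀ u (hu : u ∈ Jσ k Δ σ),
        Polynomial.X * f ⟨Polynomial.C u, C_mem_JzIdeal k Δ σ u hu⟩
          = Polynomial.C u * a := by
      intro u hu
      have h1 : (Polynomial.C u) • (⟨Polynomial.X, X_mem_JzIdeal k Δ σ⟩ : JzIdeal k Δ σ)
          = (Polynomial.X : Polynomial (SR k Δ)) •
            (⟨Polynomial.C u, C_mem_JzIdeal k Δ σ u hu⟩ : JzIdeal k Δ σ) := by
        apply Subtype.ext
        show Polynomial.C u * Polynomial.X = Polynomial.X * Polynomial.C u
        ring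
      calc Polynomial.X * f ⟨Polynomial.C u, C_mem_JzIdeal k Δ σ u hu⟩
          = f ((Polynomial.X : Polynomial (SR k Δ)) •
              (⟨Polynomial.C u, C_mem_JzIdeal k Δ σ u hu⟩ : JzIdeal k Δ σ)) := by
            rw [map_smul, smul_eq_mul]
        _ = f ((Polynomial.C u) • (⟨Polynomial.X, X_mem_JzIdeal k Δ σ⟩ : JzIdeal k Δ σ)) := by
            rw [h1]
        _ = Polynomial.C u * a := by rw [map_smul, smul_eq_mul, ha]
    have h0 : ∀ u ∈ Jσ k Δ σ, u * a.coeff 0 = 0 := by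
      intro u hu
      have h1 := congrArg (fun q => Polynomial.coeff q 0) (hcomm u hu)
      simpa [Polynomial.mul_coeff_zero] using h1.symm
    obtain ⟨w, hw⟩ := Ideal.mem_span_singleton'.mp (mem_span_xcls hΔ hG hσ _ h0)
    have hfg : f = a.divX • (JzIdeal k Δ σ).subtype
        + (Polynomial.C w) • phi0 k Δ σ := by
      apply hom_ext_on_gens
      · simp only [LinearMap.add_apply, LinearMap.smul_apply, Submodule.subtype_apply,
          smul_eq_mul, phi0_X]
        rw [← Polynomial.C_mul, hw, ← ha]
        exact (Polynomial.divX_mul_X_add a).symm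
      · intro u hu
        simp only [LinearMap.add_apply, LinearMap.smul_apply, Submodule.subtype_apply,
          smul_eq_mul, phi0_C u hu, mul_zero, add_zero]
        apply X_mul_inj (A := SR k Δ)
        rw [hcomm u hu]
        have h2 : Polynomial.X * a.divX = a - Polynomial.C (a.coeff 0) :=
          eq_sub_of_add_eq (Polynomial.X_mul_divX_add a)
        have e1 : Polynomial.C (a.coeff 0) * Polynomial.C u = 0 := by
          rw [← Polynomial.C_mul, mul_comm (a.coeff 0) u, h0 u hu, Polynomial.C_0]
        calc Polynomial.C u * a
            = (a - Polynomial.C (a.coeff 0)) * Polynomial.C u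
              + Polynomial.C (a.coeff 0) * Polynomial.C u := by ring
          _ = (a - Polynomial.C (a.coeff 0)) * Polynomial.C u := by rw [e1, add_zero]
          _ = Polynomial.X * (a.divX * Polynomial.C u) := by
              rw [show Polynomial.X * (a.divX * Polynomial.C u)
                = (Polynomial.X * a.divX) * Polynomial.C u from by ring, h2]
    rw [hfg]
    apply Submodule.add_mem
    · exact Submodule.smul_mem _ _ (Submodule.subset_span (Or.inl rfl))
    · exact Submodule.smul_mem _ _ (Submodule.subset_span (Or.inr rfl))
end

section
/- Let Δ be a Gorenstein* simplicial complex on {1,...,m} and σ ∈ Δ a face of dimension d−1, d ≥ 2, with J_σ = (0:x_σ) generated by monomials u₁,...,u_r. Let S = k[x₁,...,x_{m+1},z]/(I_Δ, x_{m+1}z − x_σ, x_{m+1}u₁, ..., x_{m+1}u_r). Then z is an S-regular element and S/(z) is isomorphic as a k-algebra to the Stanley–Reisner ring k[Δ_σ] of the stellar subdivision of Δ on σ. -/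
set_option synthInstance.maxHeartbeats 1000000
set_option maxHeartbeats 1000000

open MvPolynomial
/-- The stellar subdivision of `Δ` on `σ`, a complex on `{1, …, m+1}` with new vertex
`m+1` (modeled as `Fin.last m`). -/
def stellar {m : ℕ} (Δ : Set (Finset (Fin m))) (σ : Finset (Fin m)) :
    Set (Finset (Fin (m + 1))) :=
  ((fun τ : Finset (Fin m) => τ.image Fin.castSucc) '' {τ ∈ Δ | ¬ σ ⊆ τ}) ∪
  ((fun τ : Finset (Fin m) => insert (Fin.last m) (τ.image Fin.castSucc)) ''
    {τ | τ ∈ Δ ∧ ¬ σ ⊆ τ ∧ τ ∪ σ ∈ Δ})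

/-- The defining ideal of the Kustin–Miller unprojection ring
`S = k[x₁,…,x_{m+1},z]/(I_Δ, x_{m+1}z − x_σ, x_{m+1}u₁, …, x_{m+1}u_r)`.
Here the ambient ring is `k[x₁,…,x_{m+2}]` with `x_{m+1}` the unprojection variable and
`x_{m+2}` playing the role of `z`. -/
noncomputable def unprojIdeal (k : Type*) [Field k] {m : ℕ} (Δ : Set (Finset (Fin m)))
    (σ : Finset (Fin m)) (U : Set (MvPolynomial (Fin m) k)) :
    Ideal (MvPolynomial (Fin (m + 2)) k) :=
  (srIdeal k Δ).map
      (MvPolynomial.rename (fun i : Fin m => i.castSucc.castSucc)).toRingHom ⊔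
  Ideal.span {X ((Fin.last m).castSucc) * X (Fin.last (m + 1)) -
      MvPolynomial.rename (fun i : Fin m => i.castSucc.castSucc) (xmon k σ)} ⊔
  Ideal.span ((fun u => X ((Fin.last m).castSucc) *
      MvPolynomial.rename (fun i : Fin m => i.castSucc.castSucc) u) '' U)

namespace StellarProof

open Finsupp in
/-- exponent vector of the squarefree monomial of `ρ` -/
noncomputable def chi {α : Type*} [DecidableEq α] (ρ : Finset α) : α →₀ ℕ :=
  ∑ i ∈ ρ, Finsupp.single i 1

lemma chi_apply {α : Type*} [DecidableEq α] (ρ : Finset α) (j : α) :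
    chi ρ j = if j ∈ ρ then 1 else 0 := by
  classical
  rw [chi, Finsupp.finset_sum_apply]
  simp [Finsupp.single_apply]

lemma chi_support {α : Type*} [DecidableEq α] (ρ : Finset α) : (chi ρ).support = ρ := by
  ext i; simp [Finsupp.mem_support_iff, chi_apply]

lemma chi_le {α : Type*} [DecidableEq α] {ρ : Finset α} {t : α →₀ ℕ} :
    chi ρ ≤ t ↔ ρ ⊆ t.support := by
  rw [Finsupp.le_def]
  constructor
  · intro h i hi
    have := h i; rw [chi_apply, if_pos hi] at this
    simp only [Finsupp.mem_support_iff]; omega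
  · intro h i
    rw [chi_apply]
    by_cases hi : i ∈ ρ
    · have := h hi; rw [Finsupp.mem_support_iff] at this; simp [hi]; omega
    · simp [hi]

lemma support_add_nat {α : Type*} [DecidableEq α] (a b : α →₀ ℕ) :
    (a + b).support = a.support ∪ b.support := by
  ext i
  simp only [Finsupp.mem_support_iff, Finset.mem_union, Finsupp.add_apply]
  omega

lemma sub_add_chi_cancel {α : Type*} [DecidableEq α] {ρ : Finset α} {t : α →₀ ℕ}
    (h : ρ ⊆ t.support) : t - chi ρ + chi ρ = t := by
  ext i
  simp only [Finsupp.add_apply, Finsupp.tsub_apply, chi_apply]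
  by_cases hi : i ∈ ρ
  · have := h hi; rw [Finsupp.mem_support_iff] at this; simp [hi]; omega
  · simp [hi]

lemma xmon_eq (k : Type*) [Field k] {m : ℕ} (ρ : Finset (Fin m)) :
    xmon k ρ = monomial (chi ρ) 1 := by
  classical
  unfold xmon
  induction ρ using Finset.cons_induction with
  | empty => simp [chi]
  | cons a s ha ih =>
      rw [Finset.prod_cons, ih]
      have hch : chi (Finset.cons a s ha) = Finsupp.single a 1 + chi s := by
        rw [chi, Finset.sum_cons]; rfl
      rw [hch, X, monomial_mul, one_mul]

lemma srIdeal_eq (k : Type*) [Field k] {m : ℕ} (Δ : Set (Finset (Fin m))) :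
    srIdeal k Δ =
      Ideal.span ((fun s => monomial s (1 : k)) '' (chi '' {ρ : Finset (Fin m) | ρ ∉ Δ})) := by
  rw [srIdeal, Set.image_image]
  congr 1
  ext p
  constructor
  · rintro ⟨ρ, hρ, rfl⟩; exact ⟨ρ, hρ, (xmon_eq k ρ).symm⟩
  · rintro ⟨ρ, hρ, rfl⟩; exact ⟨ρ, hρ, xmon_eq k ρ⟩

lemma monomial_mem_span_of_le {k : Type*} [Field k] {n : Type*}
    {G : Set (n →₀ ℕ)} {t sg : n →₀ ℕ} (c : k) (hg : sg ∈ G) (hle : sg ≤ t) :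
    monomial t c ∈ Ideal.span ((fun s => monomial s (1 : k)) '' G) := by
  have h1 : (monomial sg (1 : k)) ∈ Ideal.span ((fun s => monomial s (1 : k)) '' G) :=
    Ideal.subset_span ⟨sg, hg, rfl⟩
  have h2 : monomial t c = monomial (t - sg) c * monomial sg 1 := by
    rw [monomial_mul, mul_one, tsub_add_cancel_of_le hle]
  rw [h2]
  exact Ideal.mul_mem_left _ _ h1

lemma monomial_mem_srIdeal {k : Type*} [Field k] {m : ℕ} {Δ : Set (Finset (Fin m))}
    {t : Fin m →₀ ℕ} (c : k) (h : t.support ∉ Δ) : monomial t c ∈ srIdeal k Δ := by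
  rw [srIdeal_eq]
  exact monomial_mem_span_of_le c ⟨t.support, h, rfl⟩ (chi_le.mpr subset_rfl)

lemma exists_nonface_of_monomial_mem {k : Type*} [Field k] {m : ℕ} {Δ : Set (Finset (Fin m))}
    {t : Fin m →₀ ℕ} {c : k} (hc : c ≠ 0) (h : monomial t c ∈ srIdeal k Δ) :
    ∃ ρ ∉ Δ, ρ ⊆ t.support := by
  classical
  rw [srIdeal_eq, MvPolynomial.mem_ideal_span_monomial_image] at h
  have ht : t ∈ (monomial t c).support := by
    rw [MvPolynomial.support_monomial, if_neg hc]; exact Finset.mem_singleton_self t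
  obtain ⟨si, ⟨ρ, hρ, rfl⟩, hle⟩ := h t ht
  exact ⟨ρ, hρ, chi_le.mp hle⟩

lemma mem_Jσ_iff {k : Type*} [Field k] {m : ℕ} {Δ : Set (Finset (Fin m))}
    {σ : Finset (Fin m)} (p : MvPolynomial (Fin m) k) :
    Ideal.Quotient.mk (srIdeal k Δ) p ∈ Jσ k Δ σ ↔ p * xmon k σ ∈ srIdeal k Δ := by
  rw [Jσ, Ideal.mem_colon_span_singleton, xcls, ← map_mul, Ideal.mem_bot,
    Ideal.Quotient.eq_zero_iff_mem]

/-- The set of exponents of the monomials in `U`. -/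
def EU (k : Type*) [Field k] {m : ℕ} (U : Set (MvPolynomial (Fin m) k)) :
    Set (Fin m →₀ ℕ) := {su | monomial su (1 : k) ∈ U}

section Facts

variable {k : Type*} [Field k] {m : ℕ} {Δ : Set (Finset (Fin m))}
  {σ : Finset (Fin m)} {U : Set (MvPolynomial (Fin m) k)}

lemma U_eq (hUmon : ∀ p ∈ U, ∃ s : Fin m →₀ ℕ, p = MvPolynomial.monomial s 1) :
    U = (fun su => monomial su (1 : k)) '' EU k U := by
  ext u
  constructor
  · intro hu
    obtain ⟨su, rfl⟩ := hUmon u hu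
    exact ⟨su, hu, rfl⟩
  · rintro ⟨su, hsu, rfl⟩; exact hsu

lemma u_mul_xσ_mem (hU : Ideal.span (Ideal.Quotient.mk (srIdeal k Δ) '' U) = Jσ k Δ σ)
    {u : MvPolynomial (Fin m) k} (hu : u ∈ U) : u * xmon k σ ∈ srIdeal k Δ := by
  rw [← mem_Jσ_iff, ← hU]
  exact Ideal.subset_span ⟨u, hu, rfl⟩

lemma EU_support_union (hΔ : IsComplex Δ)
    (hU : Ideal.span (Ideal.Quotient.mk (srIdeal k Δ) '' U) = Jσ k Δ σ)
    {su : Fin m →₀ ℕ} (hsu : su ∈ EU k U) : su.support ∪ σ ∉ Δ := by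
  intro habs
  have h1 : (monomial su (1:k)) * xmon k σ ∈ srIdeal k Δ := u_mul_xσ_mem hU hsu
  rw [xmon_eq, monomial_mul, mul_one] at h1
  obtain ⟨ρ, hρ, hsub⟩ := exists_nonface_of_monomial_mem one_ne_zero h1
  rw [support_add_nat, chi_support] at hsub
  exact hρ (hΔ.2 habs hsub)

lemma exists_EU_le (hΔ : IsComplex Δ)
    (hU : Ideal.span (Ideal.Quotient.mk (srIdeal k Δ) '' U) = Jσ k Δ σ)
    (hUmon : ∀ p ∈ U, ∃ s : Fin m →₀ ℕ, p = MvPolynomial.monomial s 1)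
    {t : Fin m →₀ ℕ} (h1 : t.support ∈ Δ) (h2 : t.support ∪ σ ∉ Δ) :
    ∃ su ∈ EU k U, su ≤ t := by
  classical
  have hJ : Ideal.Quotient.mk (srIdeal k Δ) (monomial t 1) ∈ Jσ k Δ σ := by
    rw [mem_Jσ_iff, xmon_eq, monomial_mul, mul_one]
    refine monomial_mem_srIdeal _ ?_
    rwa [support_add_nat, chi_support]
  rw [← hU, ← Ideal.map_span, Ideal.mem_quotient_iff_mem_sup] at hJ
  have hspan : Ideal.span U ⊔ srIdeal k Δ =
      Ideal.span ((fun s => monomial s (1 : k)) ''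
        (EU k U ∪ chi '' {ρ : Finset (Fin m) | ρ ∉ Δ})) := by
    rw [Set.image_union, Ideal.span_union, ← U_eq hUmon, ← srIdeal_eq]
  rw [hspan, MvPolynomial.mem_ideal_span_monomial_image] at hJ
  have ht : t ∈ (monomial t (1:k)).support := by
    rw [MvPolynomial.support_monomial, if_neg one_ne_zero]; exact Finset.mem_singleton_self t
  obtain ⟨si, hsi, hle⟩ := hJ t ht
  rcases hsi with hsi | ⟨ρ, hρ, rfl⟩
  · exact ⟨si, hsi, hle⟩
  · exact absurd (hΔ.2 h1 (chi_le.mp hle)) hρ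

end Facts

/-! ### The ambient polynomial ring in `m + 2` variables -/

/-- embedding of the original variables -/
def emb {m : ℕ} : Fin m → Fin (m + 2) := fun i => i.castSucc.castSucc

/-- the unprojection variable `x_{m+1}` -/
def xm1 {m : ℕ} : Fin (m + 2) := (Fin.last m).castSucc

/-- the variable `z` -/
def zv {m : ℕ} : Fin (m + 2) := Fin.last (m + 1)

lemma emb_inj {m : ℕ} : Function.Injective (emb (m := m)) :=
  Fin.castSucc_injective _ |>.comp (Fin.castSucc_injective _)

lemma emb_ne_xm1 {m : ℕ} (i : Fin m) : emb i ≠ xm1 := by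
  intro h
  exact (Fin.castSucc_lt_last i).ne (Fin.castSucc_injective _ h)

lemma emb_ne_zv {m : ℕ} (i : Fin m) : emb i ≠ zv :=
  (Fin.castSucc_lt_last _).ne

lemma xm1_ne_zv {m : ℕ} : (xm1 : Fin (m + 2)) ≠ zv :=
  (Fin.castSucc_lt_last _).ne

lemma xm1_notin_range_emb {m : ℕ} : (xm1 : Fin (m + 2)) ∉ Set.range (emb (m := m)) := by
  rintro ⟨i, hi⟩; exact emb_ne_xm1 i hi

lemma zv_notin_range_emb {m : ℕ} : (zv : Fin (m + 2)) ∉ Set.range (emb (m := m)) := by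
  rintro ⟨i, hi⟩; exact emb_ne_zv i hi

lemma classify {m : ℕ} (j : Fin (m + 2)) : (∃ i, j = emb i) ∨ j = xm1 ∨ j = zv := by
  by_cases h2 : j = Fin.last (m + 1)
  · exact Or.inr (Or.inr h2)
  obtain ⟨j', rfl⟩ := Fin.exists_castSucc_eq.mpr h2
  by_cases h1 : j' = Fin.last m
  · subst h1; exact Or.inr (Or.inl rfl)
  obtain ⟨j'', rfl⟩ := Fin.exists_castSucc_eq.mpr h1
  exact Or.inl ⟨j'', rfl⟩

/-- restriction of an exponent vector to the original variables -/
noncomputable def res {m : ℕ} (s : Fin (m + 2) →₀ ℕ) : Fin m →₀ ℕ :=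
  Finsupp.equivFunOnFinite.symm (fun i => s (emb i))

@[simp] lemma res_apply {m : ℕ} (s : Fin (m + 2) →₀ ℕ) (i : Fin m) :
    res s i = s (emb i) := rfl

lemma res_add {m : ℕ} (a b : Fin (m + 2) →₀ ℕ) : res (a + b) = res a + res b := by
  ext i; simp

lemma res_mapDomain {m : ℕ} (t : Fin m →₀ ℕ) : res (Finsupp.mapDomain emb t) = t := by
  ext i; rw [res_apply, Finsupp.mapDomain_apply emb_inj]

lemma mapDomain_emb_xm1 {m : ℕ} (t : Fin m →₀ ℕ) :
    Finsupp.mapDomain emb t xm1 = 0 :=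
  Finsupp.mapDomain_notin_range t _ xm1_notin_range_emb

lemma mapDomain_emb_zv {m : ℕ} (t : Fin m →₀ ℕ) :
    Finsupp.mapDomain emb t zv = 0 :=
  Finsupp.mapDomain_notin_range t _ zv_notin_range_emb

lemma res_single_xm1 {m : ℕ} (s : Fin (m + 2) →₀ ℕ) (c : ℕ) :
    res (s + Finsupp.single xm1 c) = res s := by
  ext i
  rw [res_apply, Finsupp.add_apply, Finsupp.single_eq_of_ne' (Ne.symm (emb_ne_xm1 i)),
    add_zero, res_apply]

lemma res_single_zv {m : ℕ} (s : Fin (m + 2) →₀ ℕ) (c : ℕ) :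
    res (s + Finsupp.single zv c) = res s := by
  ext i
  rw [res_apply, Finsupp.add_apply, Finsupp.single_eq_of_ne' (Ne.symm (emb_ne_zv i)),
    add_zero, res_apply]

lemma mapDomain_emb_le {m : ℕ} (t : Fin m →₀ ℕ) (s : Fin (m + 2) →₀ ℕ) :
    Finsupp.mapDomain emb t ≤ s ↔ t ≤ res s := by
  rw [Finsupp.le_def, Finsupp.le_def]
  constructor
  · intro h i
    have := h (emb i)
    rwa [Finsupp.mapDomain_apply emb_inj] at this
  · intro h j
    rcases classify j with ⟨i, rfl⟩ | rfl | rfl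
    · rw [Finsupp.mapDomain_apply emb_inj]; exact h i
    · rw [mapDomain_emb_xm1]; exact Nat.zero_le _
    · rw [mapDomain_emb_zv]; exact Nat.zero_le _

/-- one reduction step using the relation `x_σ = x_{m+1} z` -/
noncomputable def step {m : ℕ} (σ : Finset (Fin m)) (s : Fin (m + 2) →₀ ℕ) :
    Fin (m + 2) →₀ ℕ :=
  s - Finsupp.mapDomain emb (chi σ) + Finsupp.single xm1 1 + Finsupp.single zv 1

lemma res_step {m : ℕ} (σ : Finset (Fin m)) (s : Fin (m + 2) →₀ ℕ) :
    res (step σ s) = res s - chi σ := by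
  ext i
  rw [step, res_apply]
  rw [Finsupp.add_apply, Finsupp.add_apply,
    Finsupp.single_eq_of_ne' (Ne.symm (emb_ne_xm1 i)),
    Finsupp.single_eq_of_ne' (Ne.symm (emb_ne_zv i)),
    add_zero, add_zero, Finsupp.tsub_apply, Finsupp.mapDomain_apply emb_inj,
    Finsupp.tsub_apply, res_apply]

/-- weight used for termination -/
noncomputable def wdeg {m : ℕ} (s : Fin (m + 2) →₀ ℕ) : ℕ := ∑ i : Fin m, res s i

lemma wdeg_step_lt {m : ℕ} {σ : Finset (Fin m)} (hne : σ.Nonempty)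
    {s : Fin (m + 2) →₀ ℕ} (h : σ ⊆ (res s).support) : wdeg (step σ s) < wdeg s := by
  obtain ⟨i0, hi0⟩ := hne
  have hs0 : res s i0 ≠ 0 := Finsupp.mem_support_iff.mp (h hi0)
  refine Finset.sum_lt_sum (fun i _ => ?_) ⟨i0, Finset.mem_univ i0, ?_⟩
  · rw [res_step, Finsupp.tsub_apply]; exact Nat.sub_le _ _
  · rw [res_step, Finsupp.tsub_apply, chi_apply, if_pos hi0]; omega

/-! ### The normal form function -/

open Classical in
/-- Normal form of a monomial exponent with respect to the unprojection relations. -/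
noncomputable def NFmon (k : Type*) [Field k] {m : ℕ} (Δ : Set (Finset (Fin m)))
    (σ : Finset (Fin m)) (U : Set (MvPolynomial (Fin m) k)) (hne : σ.Nonempty)
    (s : Fin (m + 2) →₀ ℕ) : MvPolynomial (Fin (m + 2)) k :=
  if (res s).support ∉ Δ then 0
  else if s xm1 ≠ 0 ∧ ∃ su ∈ EU k U, su ≤ res s then 0
  else if h : σ ⊆ (res s).support then NFmon k Δ σ U hne (step σ s)
  else monomial s 1
termination_by wdeg s
decreasing_by exact wdeg_step_lt hne h

section NF

variable {k : Type*} [Field k] {m : ℕ} {Δ : Set (Finset (Fin m))}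
  {σ : Finset (Fin m)} {U : Set (MvPolynomial (Fin m) k)} (hne : σ.Nonempty)

lemma NFmon_of_nonface {s : Fin (m + 2) →₀ ℕ} (h : (res s).support ∉ Δ) :
    NFmon k Δ σ U hne s = 0 := by
  rw [NFmon, if_pos h]

lemma NFmon_of_ann {s : Fin (m + 2) →₀ ℕ} (h1 : s xm1 ≠ 0)
    (h2 : ∃ su ∈ EU k U, su ≤ res s) : NFmon k Δ σ U hne s = 0 := by
  rw [NFmon]
  by_cases hA : (res s).support ∉ Δ
  · rw [if_pos hA]
  · rw [if_neg hA, if_pos ⟨h1, h2⟩]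

lemma NFmon_of_step {s : Fin (m + 2) →₀ ℕ} (hA : ¬(res s).support ∉ Δ)
    (hB : ¬(s xm1 ≠ 0 ∧ ∃ su ∈ EU k U, su ≤ res s)) (hC : σ ⊆ (res s).support) :
    NFmon k Δ σ U hne s = NFmon k Δ σ U hne (step σ s) := by
  rw [NFmon, if_neg hA, if_neg hB, dif_pos hC]

/-- Standard (reduced) exponents. -/
def Std (k : Type*) [Field k] {m : ℕ} (Δ : Set (Finset (Fin m))) (σ : Finset (Fin m))
    (U : Set (MvPolynomial (Fin m) k)) (s : Fin (m + 2) →₀ ℕ) : Prop :=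
  (res s).support ∈ Δ ∧ ¬(s xm1 ≠ 0 ∧ ∃ su ∈ EU k U, su ≤ res s) ∧ ¬σ ⊆ (res s).support

lemma NFmon_of_std {s : Fin (m + 2) →₀ ℕ} (h : Std k Δ σ U s) :
    NFmon k Δ σ U hne s = monomial s 1 := by
  rw [NFmon, if_neg (by simpa using h.1), if_neg h.2.1, dif_neg h.2.2]

variable (hΔ : IsComplex Δ)
  (hU : Ideal.span (Ideal.Quotient.mk (srIdeal k Δ) '' U) = Jσ k Δ σ)
  (hUmon : ∀ p ∈ U, ∃ s : Fin m →₀ ℕ, p = MvPolynomial.monomial s 1)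

include hΔ hU hUmon in
/-- the confluence computation -/
lemma NFmon_key (s : Fin (m + 2) →₀ ℕ) :
    NFmon k Δ σ U hne (s + Finsupp.single xm1 1 + Finsupp.single zv 1) =
      NFmon k Δ σ U hne (s + Finsupp.mapDomain emb (chi σ)) := by
  classical
  set L := s + Finsupp.single xm1 1 + Finsupp.single zv 1 with hL
  set R := s + Finsupp.mapDomain emb (chi σ) with hR
  have hresL : res L = res s := by rw [hL, res_single_zv, res_single_xm1]
  have hresR : res R = res s + chi σ := by rw [hR, res_add, res_mapDomain]
  have hsuppR : (res R).support = (res s).support ∪ σ := by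
    rw [hresR, support_add_nat, chi_support]
  by_cases hcase : (res s).support ∪ σ ∈ Δ
  · -- both sides reduce to the same thing
    have h1 : NFmon k Δ σ U hne R = NFmon k Δ σ U hne (step σ R) := by
      refine NFmon_of_step hne (by rw [hsuppR]; exact not_not_intro hcase) ?_ ?_
      · rintro ⟨-, su, hsu, hle⟩
        have hsupp : su.support ⊆ (res s).support ∪ σ := by
          have := Finsupp.support_mono hle
          rwa [hsuppR] at this
        have hss : su.support ∪ σ ⊆ (res s).support ∪ σ :=
          Finset.union_subset hsupp Finset.subset_union_right
        exact EU_support_union hΔ hU hsu (hΔ.2 hcase hss)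
      · rw [hsuppR]; exact Finset.subset_union_right
    have h2 : step σ R = L := by
      rw [step, hR, hL]
      congr 1
      congr 1
      rw [add_tsub_cancel_right]
    rw [h1, h2]
  · -- both sides are zero
    have hz : NFmon k Δ σ U hne R = 0 :=
      NFmon_of_nonface hne (by rw [hsuppR]; exact hcase)
    rw [hz]
    by_cases hτ : (res s).support ∈ Δ
    · refine NFmon_of_ann hne ?_ ?_
      · rw [hL]
        simp only [Finsupp.add_apply, Finsupp.single_eq_of_ne (Ne.symm xm1_ne_zv),
          Finsupp.single_eq_same, add_zero]
        omega
      · obtain ⟨su, hsu, hle⟩ := exists_EU_le hΔ hU hUmon hτ hcase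
        exact ⟨su, hsu, by rwa [hresL]⟩
    · exact NFmon_of_nonface hne (by rwa [hresL])

end NF

/-! ### Generators of the unprojection ideal -/

/-- generating set of the unprojection ideal -/
noncomputable def Gset (k : Type*) [Field k] {m : ℕ} (Δ : Set (Finset (Fin m)))
    (σ : Finset (Fin m)) (U : Set (MvPolynomial (Fin m) k)) :
    Set (MvPolynomial (Fin (m + 2)) k) :=
  ((fun p => MvPolynomial.rename (emb (m := m)) p) '' ((fun ρ => xmon k ρ) '' {ρ | ρ ∉ Δ})) ∪
  ({X xm1 * X zv - MvPolynomial.rename emb (xmon k σ)} ∪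
    (fun u => X xm1 * MvPolynomial.rename emb u) '' U)

section Gen

variable {k : Type*} [Field k] {m : ℕ} {Δ : Set (Finset (Fin m))}
  {σ : Finset (Fin m)} {U : Set (MvPolynomial (Fin m) k)}

lemma unprojIdeal_eq : unprojIdeal k Δ σ U = Ideal.span (Gset k Δ σ U) := by
  rw [unprojIdeal, srIdeal, Ideal.map_span, Gset, Ideal.span_union, Ideal.span_union, sup_assoc]
  rfl

lemma g1_mem {ρ : Finset (Fin m)} (hρ : ρ ∉ Δ) :
    MvPolynomial.rename (emb (m := m)) (xmon k ρ) ∈ unprojIdeal k Δ σ U := by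
  rw [unprojIdeal_eq]
  exact Ideal.subset_span (Or.inl ⟨xmon k ρ, ⟨ρ, hρ, rfl⟩, rfl⟩)

lemma g2_mem : X xm1 * X zv - MvPolynomial.rename (emb (m := m)) (xmon k σ) ∈
    unprojIdeal k Δ σ U := by
  rw [unprojIdeal_eq]
  exact Ideal.subset_span (Or.inr (Or.inl rfl))

lemma g3_mem {u : MvPolynomial (Fin m) k} (hu : u ∈ U) :
    X xm1 * MvPolynomial.rename (emb (m := m)) u ∈ unprojIdeal k Δ σ U := by
  rw [unprojIdeal_eq]
  exact Ideal.subset_span (Or.inr (Or.inr ⟨u, hu, rfl⟩))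

lemma monomial_mem_of_le {I : Ideal (MvPolynomial (Fin (m + 2)) k)}
    {T s : Fin (m + 2) →₀ ℕ} (hT : monomial T (1 : k) ∈ I) (hle : T ≤ s) (c : k) :
    monomial s c ∈ I := by
  have h2 : monomial s c = monomial (s - T) c * monomial T 1 := by
    rw [monomial_mul, mul_one, tsub_add_cancel_of_le hle]
  rw [h2]
  exact Ideal.mul_mem_left _ _ hT

lemma M1 {s : Fin (m + 2) →₀ ℕ} (h : (res s).support ∉ Δ) (c : k) :
    monomial s c ∈ unprojIdeal k Δ σ U := by
  have h1 : MvPolynomial.rename (emb (m := m)) (xmon k ((res s).support)) =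
      monomial (Finsupp.mapDomain emb (chi (res s).support)) (1 : k) := by
    rw [xmon_eq, rename_monomial]
  refine monomial_mem_of_le (h1 ▸ g1_mem h) ?_ c
  rw [mapDomain_emb_le]
  exact chi_le.mpr subset_rfl

lemma M2 {s : Fin (m + 2) →₀ ℕ} {su : Fin m →₀ ℕ} (hsu : su ∈ EU k U)
    (hle : su ≤ res s) (hx : s xm1 ≠ 0) (c : k) :
    monomial s c ∈ unprojIdeal k Δ σ U := by
  have h1 : X xm1 * MvPolynomial.rename (emb (m := m)) (monomial su (1 : k)) =
      monomial (Finsupp.single xm1 1 + Finsupp.mapDomain emb su) (1 : k) := by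
    rw [rename_monomial, X, monomial_mul, one_mul]
  refine monomial_mem_of_le (h1 ▸ g3_mem hsu) ?_ c
  rw [Finsupp.le_def]
  intro j
  rcases classify j with ⟨i, rfl⟩ | rfl | rfl
  · rw [Finsupp.add_apply, Finsupp.mapDomain_apply emb_inj,
      Finsupp.single_eq_of_ne' (Ne.symm (emb_ne_xm1 i)), zero_add]
    exact hle i
  · rw [Finsupp.add_apply, mapDomain_emb_xm1, Finsupp.single_eq_same, add_zero]
    omega
  · rw [Finsupp.add_apply, mapDomain_emb_zv, Finsupp.single_eq_of_ne' xm1_ne_zv, zero_add]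
    exact Nat.zero_le _

lemma M3 {s : Fin (m + 2) →₀ ℕ} (hle : Finsupp.mapDomain emb (chi σ) ≤ s) (c : k) :
    monomial (step σ s) c - monomial s c ∈ unprojIdeal k Δ σ U := by
  have h0 := Ideal.mul_mem_left (unprojIdeal k Δ σ U)
    (monomial (s - Finsupp.mapDomain emb (chi σ)) c) g2_mem
  have h1 : monomial (s - Finsupp.mapDomain emb (chi σ)) c *
      (X xm1 * X zv - MvPolynomial.rename (emb (m := m)) (xmon k σ)) =
      monomial (step σ s) c - monomial s c := by
    rw [mul_sub, xmon_eq, rename_monomial, monomial_mul, mul_one]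
    have h2 : X (xm1 (m := m)) * X zv = monomial
        (Finsupp.single xm1 1 + Finsupp.single zv 1) (1 : k) := by
      rw [X, X, monomial_mul, one_mul]
    rw [h2, monomial_mul, mul_one, tsub_add_cancel_of_le hle, step, ← add_assoc]
  rw [← h1]
  exact h0

variable (hne : σ.Nonempty)

theorem NFmon_sub_mem (s : Fin (m + 2) →₀ ℕ) :
    NFmon k Δ σ U hne s - monomial s 1 ∈ unprojIdeal k Δ σ U := by
  by_cases h1 : (res s).support ∉ Δ
  · rw [NFmon_of_nonface hne h1, zero_sub]
    exact neg_mem (M1 h1 1)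
  · by_cases h2 : s xm1 ≠ 0 ∧ ∃ su ∈ EU k U, su ≤ res s
    · rw [NFmon_of_ann hne h2.1 h2.2, zero_sub]
      obtain ⟨hx, su, hsu, hle⟩ := h2
      exact neg_mem (M2 hsu hle hx 1)
    · by_cases h3 : σ ⊆ (res s).support
      · rw [NFmon_of_step hne h1 h2 h3]
        have IH := NFmon_sub_mem (step σ s)
        have h4 : monomial (step σ s) (1 : k) - monomial s 1 ∈ unprojIdeal k Δ σ U :=
          M3 (by rw [mapDomain_emb_le]; exact chi_le.mpr h3) 1
        have h5 := Ideal.add_mem _ IH h4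
        rwa [sub_add_sub_cancel] at h5
      · rw [NFmon_of_std hne ⟨not_not.mp h1, h2, h3⟩]
        simp
termination_by wdeg s
decreasing_by exact wdeg_step_lt hne h3

/-- The span of the standard monomials. -/
noncomputable def StdSpan (k : Type*) [Field k] {m : ℕ} (Δ : Set (Finset (Fin m)))
    (σ : Finset (Fin m)) (U : Set (MvPolynomial (Fin m) k)) :
    Submodule k (MvPolynomial (Fin (m + 2)) k) :=
  Submodule.span k ((fun s => monomial s (1 : k)) '' {s | Std k Δ σ U s})

theorem NFmon_mem_std (s : Fin (m + 2) →₀ ℕ) :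
    NFmon k Δ σ U hne s ∈ StdSpan k Δ σ U := by
  by_cases h1 : (res s).support ∉ Δ
  · rw [NFmon_of_nonface hne h1]; exact zero_mem _
  · by_cases h2 : s xm1 ≠ 0 ∧ ∃ su ∈ EU k U, su ≤ res s
    · rw [NFmon_of_ann hne h2.1 h2.2]; exact zero_mem _
    · by_cases h3 : σ ⊆ (res s).support
      · rw [NFmon_of_step hne h1 h2 h3]
        exact NFmon_mem_std (step σ s)
      · rw [NFmon_of_std hne ⟨not_not.mp h1, h2, h3⟩]
        exact Submodule.subset_span ⟨s, ⟨not_not.mp h1, h2, h3⟩, rfl⟩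
termination_by wdeg s
decreasing_by exact wdeg_step_lt hne h3

/-- The normal form, as a `k`-linear map. -/
noncomputable def NF (k : Type*) [Field k] {m : ℕ} (Δ : Set (Finset (Fin m)))
    (σ : Finset (Fin m)) (U : Set (MvPolynomial (Fin m) k)) (hne : σ.Nonempty) :
    MvPolynomial (Fin (m + 2)) k →ₗ[k] MvPolynomial (Fin (m + 2)) k :=
  (MvPolynomial.basisMonomials (Fin (m + 2)) k).constr ℕ (NFmon k Δ σ U hne)

lemma NF_monomial (s : Fin (m + 2) →₀ ℕ) (c : k) :
    NF k Δ σ U hne (monomial s c) = c • NFmon k Δ σ U hne s := by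
  have h1 : monomial s c = c • (MvPolynomial.basisMonomials (Fin (m + 2)) k) s := by
    rw [coe_basisMonomials]
    dsimp only
    rw [MvPolynomial.smul_monomial, smul_eq_mul, mul_one]
  rw [h1, map_smul, NF, Module.Basis.constr_basis]

lemma NF_sub_self_mem (p : MvPolynomial (Fin (m + 2)) k) :
    NF k Δ σ U hne p - p ∈ unprojIdeal k Δ σ U := by
  induction p using MvPolynomial.induction_on' with
  | monomial s c =>
      rw [NF_monomial]
      have h1 : c • NFmon k Δ σ U hne s - monomial s c =
          c • (NFmon k Δ σ U hne s - monomial s 1) := by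
        rw [smul_sub, MvPolynomial.smul_monomial, smul_eq_mul, mul_one]
      rw [h1, MvPolynomial.smul_eq_C_mul]
      exact Ideal.mul_mem_left _ _ (NFmon_sub_mem hne s)
  | add p q hp hq =>
      rw [map_add, add_sub_add_comm]
      exact Ideal.add_mem _ hp hq

lemma NF_mem_std (p : MvPolynomial (Fin (m + 2)) k) :
    NF k Δ σ U hne p ∈ StdSpan k Δ σ U := by
  induction p using MvPolynomial.induction_on' with
  | monomial s c => rw [NF_monomial]; exact Submodule.smul_mem _ _ (NFmon_mem_std hne s)
  | add p q hp hq => rw [map_add]; exact Submodule.add_mem _ hp hq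

lemma NF_fix {p : MvPolynomial (Fin (m + 2)) k} (hp : p ∈ StdSpan k Δ σ U) :
    NF k Δ σ U hne p = p := by
  induction hp using Submodule.span_induction with
  | mem x hx =>
      obtain ⟨s, hs, rfl⟩ := hx
      rw [NF_monomial, NFmon_of_std hne hs, one_smul]
  | zero => exact map_zero _
  | add x y hx hy ihx ihy => rw [map_add, ihx, ihy]
  | smul a x hx ihx => rw [map_smul, ihx]

lemma std_mul_z {p : MvPolynomial (Fin (m + 2)) k} (hp : p ∈ StdSpan k Δ σ U) :
    X zv * p ∈ StdSpan k Δ σ U := by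
  induction hp using Submodule.span_induction with
  | mem x hx =>
      obtain ⟨s, hs, rfl⟩ := hx
      have h1 : X (zv (m := m)) * monomial s (1 : k) =
          monomial (Finsupp.single zv 1 + s) 1 := by
        rw [X, monomial_mul, one_mul]
      rw [h1]
      refine Submodule.subset_span ⟨Finsupp.single zv 1 + s, ?_, rfl⟩
      have hres : res (Finsupp.single (zv (m := m)) 1 + s) = res s := by
        rw [add_comm, res_single_zv]
      have hxm : ((Finsupp.single (zv (m := m)) 1 + s : Fin (m + 2) →₀ ℕ)) xm1 = s xm1 := by
        rw [Finsupp.add_apply, Finsupp.single_eq_of_ne' (Ne.symm xm1_ne_zv), zero_add]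
      obtain ⟨hA, hB, hC⟩ := hs
      exact ⟨by rwa [hres], by rwa [hres, hxm], by rwa [hres]⟩
  | zero => rw [mul_zero]; exact zero_mem _
  | add x y hx hy ihx ihy => rw [mul_add]; exact Submodule.add_mem _ ihx ihy
  | smul a x hx ihx => rw [mul_smul_comm]; exact Submodule.smul_mem _ _ ihx

variable (hΔ : IsComplex Δ)
  (hU : Ideal.span (Ideal.Quotient.mk (srIdeal k Δ) '' U) = Jσ k Δ σ)
  (hUmon : ∀ p ∈ U, ∃ s : Fin m →₀ ℕ, p = MvPolynomial.monomial s 1)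

include hΔ hU hUmon in
lemma NF_mul_gen_zero {g : MvPolynomial (Fin (m + 2)) k} (hg : g ∈ Gset k Δ σ U)
    (p : MvPolynomial (Fin (m + 2)) k) : NF k Δ σ U hne (p * g) = 0 := by
  induction p using MvPolynomial.induction_on' with
  | add p q hp hq => rw [add_mul, map_add, hp, hq, add_zero]
  | monomial s c =>
    rcases hg with ⟨q, ⟨ρ, hρ, rfl⟩, rfl⟩ | hg | ⟨u, hu, rfl⟩
    · -- nonface generator
      have h1 : monomial s c * MvPolynomial.rename (emb (m := m)) (xmon k ρ) =
          monomial (s + Finsupp.mapDomain emb (chi ρ)) c := by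
        rw [xmon_eq, rename_monomial, monomial_mul, mul_one]
      rw [h1, NF_monomial]
      have h2 : (res (s + Finsupp.mapDomain emb (chi ρ))).support ∉ Δ := by
        rw [res_add, res_mapDomain, support_add_nat, chi_support]
        intro habs
        exact hρ (hΔ.2 habs Finset.subset_union_right)
      rw [NFmon_of_nonface hne h2, smul_zero]
    · -- the unprojection relation
      rw [Set.mem_singleton_iff] at hg
      subst hg
      have h1 : monomial s c *
          (X xm1 * X zv - MvPolynomial.rename (emb (m := m)) (xmon k σ)) =
          monomial (s + Finsupp.single xm1 1 + Finsupp.single zv 1) c -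
            monomial (s + Finsupp.mapDomain emb (chi σ)) c := by
        rw [mul_sub, xmon_eq, rename_monomial, monomial_mul, mul_one]
        have h2 : X (xm1 (m := m)) * X zv = monomial
            (Finsupp.single xm1 1 + Finsupp.single zv 1) (1 : k) := by
          rw [X, X, monomial_mul, one_mul]
        rw [h2, monomial_mul, mul_one, ← add_assoc]
      rw [h1, map_sub, NF_monomial, NF_monomial, NFmon_key hne hΔ hU hUmon, sub_self]
    · -- annihilator generators
      obtain ⟨su, rfl⟩ := hUmon u hu
      have hsu : su ∈ EU k U := hu
      have h1 : monomial s c * (X xm1 * MvPolynomial.rename (emb (m := m))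
          (monomial su (1 : k))) =
          monomial (s + (Finsupp.mapDomain emb su + Finsupp.single xm1 1)) c := by
        rw [rename_monomial, X, monomial_mul, one_mul, add_comm (Finsupp.single _ _),
          monomial_mul, mul_one]
      rw [h1, NF_monomial]
      have hx : ((s + (Finsupp.mapDomain emb su + Finsupp.single xm1 1) :
          Fin (m + 2) →₀ ℕ)) xm1 ≠ 0 := by
        simp only [Finsupp.add_apply, Finsupp.single_eq_same]
        omega
      have hle : su ≤ res (s + (Finsupp.mapDomain emb su + Finsupp.single xm1 1)) := by
        rw [res_add, res_add, res_mapDomain, res]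
        intro i
        simp only [Finsupp.add_apply]
        have : res (Finsupp.single (xm1 (m := m)) 1) i = 0 := by
          rw [res_apply, Finsupp.single_eq_of_ne' (Ne.symm (emb_ne_xm1 i))]
        omega
      rw [NFmon_of_ann hne hx ⟨su, hsu, hle⟩, smul_zero]

include hΔ hU hUmon in
lemma NF_zero_of_mem {f : MvPolynomial (Fin (m + 2)) k} (hf : f ∈ unprojIdeal k Δ σ U) :
    NF k Δ σ U hne f = 0 := by
  rw [unprojIdeal_eq] at hf
  have key : ∀ p, NF k Δ σ U hne (p * f) = 0 := by
    induction hf using Submodule.span_induction with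
    | mem x hx => exact fun p => NF_mul_gen_zero hne hΔ hU hUmon hx p
    | zero => intro p; rw [mul_zero, map_zero]
    | add x y hx hy ihx ihy => intro p; rw [mul_add, map_add, ihx, ihy, add_zero]
    | smul a x hx ihx =>
        intro p
        rw [smul_eq_mul, show p * (a * x) = (p * a) * x by ring]
        exact ihx (p * a)
  have h1 := key 1
  rwa [one_mul] at h1

include hne hΔ hU hUmon in
theorem z_regular (f : MvPolynomial (Fin (m + 2)) k)
    (h : X zv * f ∈ unprojIdeal k Δ σ U) : f ∈ unprojIdeal k Δ σ U := by
  set b := NF k Δ σ U hne f with hb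
  have hb1 : b - f ∈ unprojIdeal k Δ σ U := NF_sub_self_mem hne f
  have hb2 : b ∈ StdSpan k Δ σ U := NF_mem_std hne f
  have h3 : X zv * b ∈ unprojIdeal k Δ σ U := by
    have h4 : X (zv (m := m)) * b = X zv * (b - f) + X zv * f := by ring
    rw [h4]
    exact Ideal.add_mem _ (Ideal.mul_mem_left _ _ hb1) h
  have h5 : X (zv (m := m)) * b = 0 := by
    have h6 := NF_fix hne (std_mul_z hb2)
    rw [NF_zero_of_mem hne hΔ hU hUmon h3] at h6
    exact h6.symm
  have h7 : b = 0 := by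
    rcases mul_eq_zero.mp h5 with h8 | h8
    · exact absurd h8 (MvPolynomial.X_ne_zero _)
    · exact h8
  have h9 : b - f = -f := by rw [h7, zero_sub]
  have h10 : -f ∈ unprojIdeal k Δ σ U := h9 ▸ hb1
  simpa using neg_mem h10

end Gen

/-! ### The quotient by `z` -/

/-- embedding `Fin m → Fin (m+1)` -/
abbrev cs {m : ℕ} : Fin m → Fin (m + 1) := Fin.castSucc

/-- the new vertex of the stellar subdivision -/
abbrev lastv {m : ℕ} : Fin (m + 1) := Fin.last m

/-- the specialization `z ↦ 0` -/
noncomputable def phi (k : Type*) [Field k] {m : ℕ} :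
    MvPolynomial (Fin (m + 2)) k →ₐ[k] MvPolynomial (Fin (m + 1)) k :=
  aeval (fun j => if h : j = Fin.last (m + 1) then 0 else X (j.castPred h))

section Phi

variable {k : Type*} [Field k] {m : ℕ}

lemma cs_inj : Function.Injective (cs (m := m)) := Fin.castSucc_injective _

lemma cs_ne_lastv (i : Fin m) : cs i ≠ lastv := (Fin.castSucc_lt_last i).ne

lemma lastv_notin_image (τ : Finset (Fin m)) : lastv ∉ τ.image cs := by
  intro h
  obtain ⟨i, -, hi⟩ := Finset.mem_image.mp h
  exact cs_ne_lastv i hi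

lemma lastv_notin_range : (lastv : Fin (m + 1)) ∉ Set.range (cs (m := m)) := by
  rintro ⟨i, hi⟩
  exact cs_ne_lastv i hi

lemma classify' (j : Fin (m + 1)) : (∃ i, j = cs i) ∨ j = lastv := by
  by_cases h : j = Fin.last m
  · exact Or.inr h
  obtain ⟨j', rfl⟩ := Fin.exists_castSucc_eq.mpr h
  exact Or.inl ⟨j', rfl⟩

lemma phi_X_emb (i : Fin m) : phi k (X (emb i)) = X (cs i) := by
  rw [phi, aeval_X]
  have h : emb i ≠ Fin.last (m + 1) := emb_ne_zv i
  rw [dif_neg h]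
  congr 1

lemma phi_X_xm1 : phi k (X (xm1 (m := m))) = X lastv := by
  rw [phi, aeval_X]
  have h : xm1 (m := m) ≠ Fin.last (m + 1) := xm1_ne_zv
  rw [dif_neg h]
  congr 1

lemma phi_X_zv : phi k (X (zv (m := m))) = 0 := by
  rw [phi, aeval_X]
  have h : zv (m := m) = Fin.last (m + 1) := rfl
  rw [dif_pos h]

lemma phi_X_castSucc (j : Fin (m + 1)) : phi k (X j.castSucc) = X j := by
  rw [phi, aeval_X]
  have h : j.castSucc ≠ Fin.last (m + 1) := (Fin.castSucc_lt_last j).ne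
  rw [dif_neg h]
  congr 1

lemma phi_rename (p : MvPolynomial (Fin m) k) :
    phi k (MvPolynomial.rename (emb (m := m)) p) = MvPolynomial.rename cs p := by
  have hcomp : (phi k).comp (MvPolynomial.rename (emb (m := m))) =
      (MvPolynomial.rename (cs (m := m)) :
        MvPolynomial (Fin m) k →ₐ[k] MvPolynomial (Fin (m + 1)) k) := by
    apply MvPolynomial.algHom_ext
    intro i
    rw [AlgHom.comp_apply, rename_X, rename_X, phi_X_emb]
  exact AlgHom.congr_fun hcomp p

lemma phi_surjective : Function.Surjective (phi k (m := m)) := by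
  intro q
  induction q using MvPolynomial.induction_on with
  | C a => exact ⟨C a, by simp [phi]⟩
  | add p q hp hq =>
      obtain ⟨p', hp'⟩ := hp
      obtain ⟨q', hq'⟩ := hq
      exact ⟨p' + q', by rw [map_add, hp', hq']⟩
  | mul_X p j hp =>
      obtain ⟨p', hp'⟩ := hp
      exact ⟨p' * X j.castSucc, by rw [map_mul, hp', phi_X_castSucc]⟩

lemma sub_iota_mem (p : MvPolynomial (Fin (m + 2)) k) :
    p - MvPolynomial.rename Fin.castSucc (phi k p) ∈ Ideal.span {X (zv (m := m))} := by
  induction p using MvPolynomial.induction_on with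
  | C a =>
      have h1 : phi k (C a : MvPolynomial (Fin (m + 2)) k) = C a := by simp [phi]
      rw [h1, rename_C, sub_self]
      exact zero_mem _
  | add p q hp hq =>
      rw [map_add, map_add, add_sub_add_comm]
      exact add_mem hp hq
  | mul_X p j hp =>
      by_cases hj : j = zv
      · subst hj
        rw [map_mul, phi_X_zv, mul_zero, map_zero, sub_zero]
        exact Ideal.mul_mem_left _ p (Ideal.subset_span rfl)
      · have hψ : MvPolynomial.rename (Fin.castSucc : Fin (m + 1) → Fin (m + 2))
            (phi k (X j)) = X j := by
          rw [phi, aeval_X]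
          have hj' : j ≠ Fin.last (m + 1) := hj
          rw [dif_neg hj', rename_X, Fin.castSucc_castPred]
        rw [map_mul, map_mul, hψ, ← sub_mul]
        exact Ideal.mul_mem_right _ _ hp

lemma ker_phi : RingHom.ker (phi k (m := m)) = Ideal.span {X zv} := by
  apply le_antisymm
  · intro p hp
    have h0 : phi k p = 0 := RingHom.mem_ker.mp hp
    have h1 := sub_iota_mem p
    rwa [h0, map_zero, sub_zero] at h1
  · rw [Ideal.span_le, Set.singleton_subset_iff, SetLike.mem_coe]
    exact RingHom.mem_ker.mpr phi_X_zv

lemma mapDomain_cs_chi (ρ : Finset (Fin m)) :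
    Finsupp.mapDomain (cs (m := m)) (chi ρ) = chi (ρ.image cs) := by
  ext j
  rcases classify' j with ⟨i, rfl⟩ | rfl
  · rw [Finsupp.mapDomain_apply cs_inj, chi_apply, chi_apply]
    by_cases hi : i ∈ ρ
    · rw [if_pos hi, if_pos (Finset.mem_image_of_mem _ hi)]
    · rw [if_neg hi, if_neg (fun habs => hi ?_)]
      obtain ⟨i', hi', heq⟩ := Finset.mem_image.mp habs
      rwa [← cs_inj heq]
  · rw [Finsupp.mapDomain_notin_range _ _ lastv_notin_range, chi_apply,
      if_neg (lastv_notin_image ρ)]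

lemma E_xmon (ρ : Finset (Fin m)) :
    MvPolynomial.rename (cs (m := m)) (xmon k ρ) = xmon k (ρ.image cs) := by
  rw [xmon_eq, rename_monomial, mapDomain_cs_chi, ← xmon_eq]

lemma mapDomain_cs_mono {t t' : Fin m →₀ ℕ} (h : t ≤ t') :
    Finsupp.mapDomain (cs (m := m)) t ≤ Finsupp.mapDomain cs t' := by
  rw [Finsupp.le_def]
  intro j
  rcases classify' j with ⟨i, rfl⟩ | rfl
  · rw [Finsupp.mapDomain_apply cs_inj, Finsupp.mapDomain_apply cs_inj]
    exact h i
  · rw [Finsupp.mapDomain_notin_range _ _ lastv_notin_range,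
      Finsupp.mapDomain_notin_range _ _ lastv_notin_range]

lemma chi_insert {a : Fin (m + 1)} {s : Finset (Fin (m + 1))} (ha : a ∉ s) :
    chi (insert a s) = Finsupp.single a 1 + chi s := by
  rw [chi, Finset.sum_insert ha, ← chi]

end Phi

section Stellar

variable {k : Type*} [Field k] {m : ℕ} {Δ : Set (Finset (Fin m))}
  {σ : Finset (Fin m)} {U : Set (MvPolynomial (Fin m) k)}

lemma image_mem_stellar_iff {τ : Finset (Fin m)} :
    τ.image (cs (m := m)) ∈ stellar Δ σ ↔ (τ ∈ Δ ∧ ¬σ ⊆ τ) := by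
  constructor
  · rintro (⟨τ', ⟨h1, h2⟩, heq⟩ | ⟨τ', ⟨h1, h2, h3⟩, heq⟩)
    · obtain rfl : τ' = τ := Finset.image_injective cs_inj heq
      exact ⟨h1, h2⟩
    · exfalso
      dsimp only at heq
      have hlm := Finset.mem_insert_self (Fin.last m) (τ'.image Fin.castSucc)
      rw [heq] at hlm
      exact lastv_notin_image τ hlm
  · rintro ⟨h1, h2⟩
    exact Or.inl ⟨τ, ⟨h1, h2⟩, rfl⟩

lemma insert_mem_stellar_iff {τ : Finset (Fin m)} :
    insert lastv (τ.image (cs (m := m))) ∈ stellar Δ σ ↔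
      (τ ∈ Δ ∧ ¬σ ⊆ τ ∧ τ ∪ σ ∈ Δ) := by
  constructor
  · rintro (⟨τ', h, heq⟩ | ⟨τ', ⟨h1, h2, h3⟩, heq⟩)
    · exfalso
      have h4 : (lastv : Fin (m + 1)) ∈ insert lastv (τ.image cs) :=
        Finset.mem_insert_self _ _
      rw [← heq] at h4
      exact lastv_notin_image τ' h4
    · have himg : τ'.image (cs (m := m)) = τ.image cs := by
        have h5 := congrArg (fun s => Finset.erase s lastv) heq
        simpa [Finset.erase_insert (lastv_notin_image τ'),
          Finset.erase_insert (lastv_notin_image τ)] using h5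
      obtain rfl : τ' = τ := Finset.image_injective cs_inj himg
      exact ⟨h1, h2, h3⟩
  · rintro ⟨h1, h2, h3⟩
    exact Or.inr ⟨τ, ⟨h1, h2, h3⟩, rfl⟩

lemma decomp_no {ρ : Finset (Fin (m + 1))} (h : lastv ∉ ρ) :
    ρ = (Finset.univ.filter fun i => cs i ∈ ρ).image cs := by
  ext j
  rcases classify' j with ⟨i, rfl⟩ | rfl
  · simp only [Finset.mem_image, Finset.mem_filter, Finset.mem_univ, true_and]
    constructor
    · intro hj; exact ⟨i, hj, rfl⟩
    · rintro ⟨i', hi', heq⟩; rwa [← cs_inj heq]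
  · simp only [Finset.mem_image, Finset.mem_filter, Finset.mem_univ, true_and]
    constructor
    · intro hj; exact absurd hj h
    · rintro ⟨i', -, heq⟩; exact absurd heq (cs_ne_lastv i')

lemma decomp_yes {ρ : Finset (Fin (m + 1))} (h : lastv ∈ ρ) :
    ρ = insert lastv ((Finset.univ.filter fun i => cs i ∈ ρ).image cs) := by
  ext j
  rcases classify' j with ⟨i, rfl⟩ | rfl
  · rw [Finset.mem_insert]
    simp only [Finset.mem_image, Finset.mem_filter, Finset.mem_univ, true_and]
    constructor
    · intro hj; exact Or.inr ⟨i, hj, rfl⟩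
    · rintro (heq | ⟨i', hi', heq⟩)
      · exact absurd heq (cs_ne_lastv i)
      · rwa [← cs_inj heq]
  · rw [Finset.mem_insert]
    constructor
    · intro _; exact Or.inl rfl
    · intro _; exact h

variable (hΔ : IsComplex Δ)
  (hU : Ideal.span (Ideal.Quotient.mk (srIdeal k Δ) '' U) = Jσ k Δ σ)
  (hUmon : ∀ p ∈ U, ∃ s : Fin m →₀ ℕ, p = MvPolynomial.monomial s 1)

lemma mp1 {q : MvPolynomial (Fin m) k} (hq : q ∈ srIdeal k Δ) :
    MvPolynomial.rename (cs (m := m)) q ∈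
      Ideal.map (phi k) (unprojIdeal k Δ σ U) := by
  have h1 : MvPolynomial.rename (emb (m := m)) q ∈ unprojIdeal k Δ σ U := by
    refine Ideal.mem_sup_left (Ideal.mem_sup_left ?_)
    exact Ideal.mem_map_of_mem _ hq
  have h2 := Ideal.mem_map_of_mem (phi k) h1
  rwa [phi_rename] at h2

lemma mp2 : MvPolynomial.rename (cs (m := m)) (xmon k σ) ∈
    Ideal.map (phi k) (unprojIdeal k Δ σ U) := by
  have h1 : -(X xm1 * X zv - MvPolynomial.rename (emb (m := m)) (xmon k σ)) ∈
      unprojIdeal k Δ σ U := neg_mem g2_mem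
  have h2 := Ideal.mem_map_of_mem (phi k) h1
  rwa [map_neg, map_sub, map_mul, phi_X_zv, mul_zero, zero_sub, neg_neg, phi_rename] at h2

lemma mp3 {u : MvPolynomial (Fin m) k} (hu : u ∈ U) :
    X lastv * MvPolynomial.rename (cs (m := m)) u ∈
      Ideal.map (phi k) (unprojIdeal k Δ σ U) := by
  have h1 : X xm1 * MvPolynomial.rename (emb (m := m)) u ∈ unprojIdeal k Δ σ U :=
    g3_mem hu
  have h2 := Ideal.mem_map_of_mem (phi k) h1
  rwa [map_mul, phi_X_xm1, phi_rename] at h2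

lemma xmon_image_factor {τ : Finset (Fin m)} (h2 : σ ⊆ τ) :
    xmon k (τ.image (cs (m := m))) =
      monomial (chi (τ.image cs) - chi (σ.image cs)) 1 *
        MvPolynomial.rename cs (xmon k σ) := by
  have hle : chi (σ.image (cs (m := m))) ≤ chi (τ.image cs) := by
    rw [chi_le, chi_support]
    exact Finset.image_subset_image h2
  rw [E_xmon, xmon_eq, xmon_eq, monomial_mul, mul_one, tsub_add_cancel_of_le hle]

include hΔ hU hUmon in
lemma map_phi_I :
    Ideal.map (phi k) (unprojIdeal k Δ σ U) = srIdeal k (stellar Δ σ) := by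
  apply le_antisymm
  · rw [unprojIdeal_eq, Ideal.map_span, Ideal.span_le]
    rintro q ⟨g, hg, rfl⟩
    rcases hg with ⟨q', ⟨ρ, hρ, rfl⟩, rfl⟩ | hg | ⟨u, hu, rfl⟩
    · rw [SetLike.mem_coe, phi_rename, E_xmon]
      refine Ideal.subset_span ⟨ρ.image cs, fun habs => ?_, rfl⟩
      exact hρ (image_mem_stellar_iff.mp habs).1
    · rw [Set.mem_singleton_iff] at hg
      subst hg
      rw [SetLike.mem_coe, map_sub, map_mul, phi_X_zv, mul_zero, zero_sub, phi_rename,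
        E_xmon]
      refine neg_mem (Ideal.subset_span ⟨σ.image cs, fun habs => ?_, rfl⟩)
      exact (image_mem_stellar_iff.mp habs).2 subset_rfl
    · rw [SetLike.mem_coe, map_mul, phi_X_xm1, phi_rename]
      obtain ⟨su, rfl⟩ := hUmon u hu
      have hsu : su ∈ EU k U := hu
      have hmul : X (lastv (m := m)) * MvPolynomial.rename cs (monomial su (1 : k)) =
          monomial (Finsupp.single lastv 1 + Finsupp.mapDomain cs su) 1 := by
        rw [rename_monomial, X, monomial_mul, one_mul]
      rw [hmul, srIdeal_eq]
      by_cases hτ : su.support ∈ Δ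
      · have hns := EU_support_union hΔ hU hsu
        refine monomial_mem_span_of_le 1
          ⟨insert lastv (su.support.image cs), fun habs => ?_, rfl⟩ ?_
        · exact hns (insert_mem_stellar_iff.mp habs).2.2
        · rw [chi_insert (lastv_notin_image _), ← mapDomain_cs_chi]
          exact add_le_add le_rfl (mapDomain_cs_mono (chi_le.mpr subset_rfl))
      · refine monomial_mem_span_of_le 1
          ⟨su.support.image cs, fun habs => ?_, rfl⟩ ?_
        · exact hτ (image_mem_stellar_iff.mp habs).1
        · rw [← mapDomain_cs_chi]
          exact le_add_of_nonneg_of_le zero_le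
            (mapDomain_cs_mono (chi_le.mpr subset_rfl))
  · rw [srIdeal, Ideal.span_le]
    rintro q ⟨ρ, hρ, rfl⟩
    simp only [Set.mem_setOf_eq] at hρ
    simp only [SetLike.mem_coe]
    by_cases hlast : lastv ∈ ρ
    · set τ := Finset.univ.filter (fun i => cs i ∈ ρ) with hτdef
      have hdec : ρ = insert lastv (τ.image cs) := decomp_yes hlast
      rw [hdec] at hρ ⊢
      have hsplit : xmon k (insert lastv (τ.image (cs (m := m)))) =
          X lastv * xmon k (τ.image cs) := by
        rw [xmon, xmon, Finset.prod_insert (lastv_notin_image τ)]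
      rw [hsplit]
      rw [insert_mem_stellar_iff] at hρ
      by_cases h1 : τ ∈ Δ
      · by_cases h2 : σ ⊆ τ
        · rw [xmon_image_factor h2, ← mul_assoc]
          exact Ideal.mul_mem_left _ _ mp2
        · have h3 : τ ∪ σ ∉ Δ := fun habs => hρ ⟨h1, h2, habs⟩
          obtain ⟨su, hsu, hle⟩ := exists_EU_le hΔ hU hUmon (t := chi τ)
            (by rw [chi_support]; exact h1) (by rw [chi_support]; exact h3)
          have hfac : X (lastv (m := m)) * xmon k (τ.image cs) =
              monomial (Finsupp.mapDomain cs (chi τ - su)) 1 *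
                (X lastv * MvPolynomial.rename cs (monomial su (1 : k))) := by
            have hd : chi τ = (chi τ - su) + su := (tsub_add_cancel_of_le hle).symm
            rw [← E_xmon, xmon_eq]
            conv_lhs => rw [hd]
            rw [rename_monomial, rename_monomial, Finsupp.mapDomain_add, X,
              monomial_mul, monomial_mul, monomial_mul, one_mul, one_mul]
            have hexp : (Finsupp.single (lastv (m := m)) 1 +
                (Finsupp.mapDomain cs (chi τ - su) + Finsupp.mapDomain cs su) :
                  Fin (m + 1) →₀ ℕ) =
                Finsupp.mapDomain cs (chi τ - su) +
                  (Finsupp.single lastv 1 + Finsupp.mapDomain cs su) :=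
              add_left_comm _ _ _
            rw [hexp]
          rw [hfac]
          exact Ideal.mul_mem_left _ _ (mp3 hsu)
      · rw [← E_xmon]
        exact Ideal.mul_mem_left _ _ (mp1 (Ideal.subset_span ⟨τ, h1, rfl⟩))
    · set τ := Finset.univ.filter (fun i => cs i ∈ ρ) with hτdef
      have hdec : ρ = τ.image cs := decomp_no hlast
      rw [hdec] at hρ ⊢
      rw [image_mem_stellar_iff] at hρ
      by_cases h1 : τ ∈ Δ
      · have h2 : σ ⊆ τ := not_not.mp (fun h2 => hρ ⟨h1, h2⟩)
        rw [xmon_image_factor h2]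
        exact Ideal.mul_mem_left _ _ mp2
      · rw [← E_xmon]
        exact mp1 (Ideal.subset_span ⟨τ, h1, rfl⟩)

end Stellar

end StellarProof

/-- for a Gorenstein* complex `Δ` and a face `σ` of dimension ≥ 1,
in the Kustin–Miller unprojection ring `S` the element `z` is `S`-regular, and
`S/(z) ≅ k[Δ_σ]` as `k`-algebras. -/
theorem unprojection_z_regular_and_quotient (k : Type*) [Field k] {m : ℕ}
    (Δ : Set (Finset (Fin m))) (hΔ : IsComplex Δ) (hG : IsGorensteinStar k Δ)
    (σ : Finset (Fin m)) (hσ : σ ∈ Δ) (hcard : 2 ≤ σ.card)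
    (U : Set (MvPolynomial (Fin m) k))
    (hUmon : ∀ p ∈ U, ∃ s : Fin m →₀ ℕ, p = MvPolynomial.monomial s 1)
    (hU : Ideal.span (Ideal.Quotient.mk (srIdeal k Δ) '' U) = Jσ k Δ σ) :
    (∀ s : MvPolynomial (Fin (m + 2)) k ⧸ unprojIdeal k Δ σ U,
        Ideal.Quotient.mk (unprojIdeal k Δ σ U) (X (Fin.last (m + 1))) * s = 0 → s = 0) ∧
    Nonempty (((MvPolynomial (Fin (m + 2)) k ⧸ unprojIdeal k Δ σ U) ⧸
        Ideal.span {Ideal.Quotient.mk (unprojIdeal k Δ σ U) (X (Fin.last (m + 1)))}) ≃ₐ[k]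
      SR k (stellar Δ σ)) := by
  classical
  have hne : σ.Nonempty := Finset.card_pos.mp (by omega)
  constructor
  · intro sbar h
    obtain ⟨f, rfl⟩ := Ideal.Quotient.mk_surjective sbar
    rw [← map_mul, Ideal.Quotient.eq_zero_iff_mem] at h
    have h3 : X (StellarProof.zv (m := m)) * f ∈ unprojIdeal k Δ σ U := h
    exact Ideal.Quotient.eq_zero_iff_mem.mpr
      (StellarProof.z_regular hne hΔ hU hUmon f h3)
  · set I := unprojIdeal k Δ σ U with hI
    set J := srIdeal k (stellar Δ σ) with hJ
    have hsurj : Function.Surjective ⇑(StellarProof.phi k (m := m)) :=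
      StellarProof.phi_surjective
    set ψ : MvPolynomial (Fin (m + 2)) k →ₐ[k] SR k (stellar Δ σ) :=
      (Ideal.Quotient.mkₐ k J).comp (StellarProof.phi k) with hψ
    have hψs : Function.Surjective ⇑ψ := by
      rw [hψ, AlgHom.coe_comp]
      exact (Ideal.Quotient.mkₐ_surjective J (R₁ := k)).comp hsurj
    have hker : RingHom.ker ψ = I ⊔ Ideal.span {X (StellarProof.zv (m := m))} := by
      have hk1 : RingHom.ker ψ = Ideal.comap (StellarProof.phi k) J := by
        ext x
        simp only [hψ, RingHom.mem_ker, AlgHom.coe_comp, Function.comp_apply,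
          Ideal.Quotient.mkₐ_eq_mk, Ideal.Quotient.eq_zero_iff_mem, Ideal.mem_comap]
      rw [hk1, hJ, ← StellarProof.map_phi_I hΔ hU hUmon,
        Ideal.comap_map_of_surjective _ hsurj, ← hI]
      congr 1
      exact StellarProof.ker_phi
    have e1 : Ideal.span {Ideal.Quotient.mk I (X (Fin.last (m + 1)))} =
        (Ideal.span {X (StellarProof.zv (m := m))}).map (Ideal.Quotient.mkₐ k I) := by
      rw [Ideal.map_span, Set.image_singleton, Ideal.Quotient.mkₐ_eq_mk]
      rfl
    exact ⟨(Ideal.quotientEquivAlgOfEq k e1).trans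
      ((DoubleQuot.quotQuotEquivQuotSupₐ k I
          (Ideal.span {X (StellarProof.zv (m := m))})).trans
        ((Ideal.quotientEquivAlgOfEq k hker.symm).trans
          (Ideal.quotientKerAlgEquivOfSurjective hψs)))⟩
end
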